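/- arXiv:2308.01166 — 5 statements merged into one kernel-verified Lean document; each statement's English description precedes it below -/
import Mathlib

section
/- For nonzero complex coefficients c_1,…,c_{ℓ-1}, the operators M(c) = Σ_{k=1}^{ℓ-1} c_k b'_{k+1} b_k, M'(c) = Σ_{k=1}^{ℓ-1} (k(ℓ-k)/c_k) b'_k b_{k+1}, and Z = Σ_{k=1}^{ℓ} (2k-ℓ-1) b'_k b_k satisfy [Z, M(c)] = 2M(c), [Z, M'(c)] = -2M'(c), and [M(c), M'(c)] = Z. -/
lemma car_comm_aux {A : Type*} [Ring A] (p q r s α β : A)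
    (hα : ∀ x : A, α * x = x * α) (hβ : ∀ x : A, β * x = x * β)
    (h1 : q * r = α - r * q) (h2 : s * p = β - p * s)
    (h3 : p * r = -(r * p)) (h4 : q * s = -(s * q)) :
    (p * q) * (r * s) - (r * s) * (p * q) = α * (p * s) - β * (r * q) := by
  have e3 : p * r * (q * s) = r * p * (s * q) := by
    rw [h3, h4]; noncomm_ring
  have e1 : (p * q) * (r * s) = α * (p * s) - p * r * (q * s) := by
    have : (p * q) * (r * s) = p * (q * r) * s := by noncomm_ring
    rw [this, h1, mul_sub, sub_mul, ← hα p]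
    noncomm_ring
  have e2 : (r * s) * (p * q) = β * (r * q) - r * p * (s * q) := by
    have : (r * s) * (p * q) = r * (s * p) * q := by noncomm_ring
    rw [this, h2, mul_sub, sub_mul, ← hβ r]
    noncomm_ring
  rw [e1, e2, e3]; abel

lemma car_tele {A : Type*} [AddCommGroup A] [Module ℂ A] (n : ℕ) (a : ℕ → ℂ) (f : ℕ → A) :
    ∑ k ∈ Finset.range n, a (k+1) • (f (k+2) - f (k+1))
      = a n • f (n+1) - (a 0) • f 1 - ∑ k ∈ Finset.range n, (a (k+1) - a k) • f (k+1) := by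
  induction n with
  | zero => simp
  | succ n ih =>
    rw [Finset.sum_range_succ, ih, Finset.sum_range_succ]
    simp only [smul_sub, sub_smul]
    abel

lemma car_expand {A : Type*} [Ring A] [Algebra ℂ A] (U V : Finset ℕ) (u v : ℕ → ℂ) (X Y : ℕ → A) :
    (∑ j ∈ U, u j • X j) * (∑ k ∈ V, v k • Y k) - (∑ k ∈ V, v k • Y k) * (∑ j ∈ U, u j • X j)
      = ∑ k ∈ V, ∑ j ∈ U, (u j * v k) • (X j * Y k - Y k * X j) := by
  simp only [Finset.sum_mul, Finset.mul_sum, smul_mul_smul_comm]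
  rw [show (∑ j ∈ U, ∑ k ∈ V, (v k * u j) • (Y k * X j))
      = ∑ k ∈ V, ∑ j ∈ U, (v k * u j) • (Y k * X j) from Finset.sum_comm]
  rw [← Finset.sum_sub_distrib]
  refine Finset.sum_congr rfl fun k _ => ?_
  rw [← Finset.sum_sub_distrib]
  refine Finset.sum_congr rfl fun j _ => ?_
  rw [smul_sub, mul_comm (v k) (u j)]

/-- the sl₂-triple relations also hold for spatially varying nonzero
couplings `c_k`:  M(c) = Σ c_k b'_{k+1} b_k,  M'(c) = Σ (k(ℓ-k)/c_k) b'_k b_{k+1},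
Z = Σ (2k-ℓ-1) b'_k b_k satisfy [Z,M(c)] = 2M(c), [Z,M'(c)] = -2M'(c), [M(c),M'(c)] = Z. -/
theorem sl2_triple_of_CAR_varying (ℓ : ℕ) (hℓ : 1 ≤ ℓ)
    (A : Type*) [Ring A] [Algebra ℂ A] (b b' : ℕ → A)
    (hbb : ∀ m ∈ Finset.Icc 1 ℓ, ∀ n ∈ Finset.Icc 1 ℓ, b m * b n + b n * b m = 0)
    (hb'b' : ∀ m ∈ Finset.Icc 1 ℓ, ∀ n ∈ Finset.Icc 1 ℓ, b' m * b' n + b' n * b' m = 0)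
    (hbb' : ∀ m ∈ Finset.Icc 1 ℓ, ∀ n ∈ Finset.Icc 1 ℓ,
      b m * b' n + b' n * b m = if m = n then 1 else 0)
    (c : ℕ → ℂ) (hc : ∀ k ∈ Finset.Icc 1 (ℓ - 1), c k ≠ 0)
    (M M' Z : A)
    (hM : M = ∑ k ∈ Finset.Icc 1 (ℓ - 1), (c k) • (b' (k + 1) * b k))
    (hM' : M' = ∑ k ∈ Finset.Icc 1 (ℓ - 1),
      ((k : ℂ) * ((ℓ : ℂ) - k) / c k) • (b' k * b (k + 1)))
    (hZ : Z = ∑ k ∈ Finset.Icc 1 ℓ, ((2 * (k : ℂ) - ℓ - 1)) • (b' k * b k)) :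
    Z * M - M * Z = 2 * M ∧ Z * M' - M' * Z = -(2 * M') ∧ M * M' - M' * M = Z := by
  set S := Finset.Icc 1 ℓ with hS
  set T := Finset.Icc 1 (ℓ - 1) with hT
  have hTS : ∀ k ∈ T, k ∈ S := by
    intro k hk; rw [hT, Finset.mem_Icc] at hk; rw [hS, Finset.mem_Icc]; omega
  have hT1 : ∀ k ∈ T, k + 1 ∈ S := by
    intro k hk; rw [hT, Finset.mem_Icc] at hk; rw [hS, Finset.mem_Icc]; omega
  have key : ∀ a ∈ S, ∀ m ∈ S, ∀ n ∈ S, ∀ d ∈ S,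
      (b' a * b m) * (b' n * b d) - (b' n * b d) * (b' a * b m)
        = (if m = n then b' a * b d else 0) - (if d = a then b' n * b m else 0) := by
    intro a ha m hm n hn d hd
    have h := car_comm_aux (b' a) (b m) (b' n) (b d)
      (if m = n then 1 else 0) (if d = a then 1 else 0)
      (by intro x; split_ifs <;> simp)
      (by intro x; split_ifs <;> simp)
      (eq_sub_of_add_eq (hbb' m hm n hn))
      (eq_sub_of_add_eq (hbb' d hd a ha))
      (eq_neg_of_add_eq_zero_left (hb'b' a ha n hn))
      (eq_neg_of_add_eq_zero_left (hbb m hm d hd))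
    rw [h]
    congr 1 <;> split_ifs <;> simp
  refine ⟨?_, ?_, ?_⟩
  · -- [Z, M] = 2M
    have h2M : 2 * M = ∑ k ∈ T, (2 * c k) • (b' (k + 1) * b k) := by
      rw [hM, Finset.mul_sum]
      refine Finset.sum_congr rfl fun k _ => ?_
      simp [two_mul, smul_add, add_smul]
    rw [h2M, hZ, hM, car_expand]
    refine Finset.sum_congr rfl fun k hk => ?_
    have hk1 := hT1 k hk
    have hk0 := hTS k hk
    calc ∑ j ∈ S, ((2*(j:ℂ)-ℓ-1) * c k) •
          ((b' j * b j) * (b' (k+1) * b k) - (b' (k+1) * b k) * (b' j * b j))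
        = ∑ j ∈ S, ((if j = k+1 then ((2*(j:ℂ)-ℓ-1) * c k) • (b' j * b k) else 0)
            - (if k = j then ((2*(j:ℂ)-ℓ-1) * c k) • (b' (k+1) * b j) else 0)) := by
          refine Finset.sum_congr rfl fun j hj => ?_
          rw [key j hj j hj (k+1) hk1 k hk0, smul_sub]
          congr 1 <;> split_ifs <;> simp
      _ = (2 * c k) • (b' (k + 1) * b k) := by
          rw [Finset.sum_sub_distrib, Finset.sum_ite_eq' S (k+1), Finset.sum_ite_eq S k,
            if_pos hk1, if_pos hk0, ← sub_smul]
          congr 1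
          push_cast
          ring
  · -- [Z, M'] = -2M'
    have h2M' : -(2 * M') = ∑ k ∈ T, ((-2 : ℂ) * ((k:ℂ) * ((ℓ:ℂ) - k) / c k)) • (b' k * b (k+1)) := by
      rw [hM', Finset.mul_sum, ← Finset.sum_neg_distrib]
      refine Finset.sum_congr rfl fun k _ => ?_
      simp [two_mul, smul_add, add_smul, neg_smul]
    rw [h2M', hZ, hM', car_expand]
    refine Finset.sum_congr rfl fun k hk => ?_
    have hk1 := hT1 k hk
    have hk0 := hTS k hk
    calc ∑ j ∈ S, ((2*(j:ℂ)-ℓ-1) * ((k:ℂ) * ((ℓ:ℂ) - k) / c k)) •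
          ((b' j * b j) * (b' k * b (k+1)) - (b' k * b (k+1)) * (b' j * b j))
        = ∑ j ∈ S, ((if j = k then ((2*(j:ℂ)-ℓ-1) * ((k:ℂ) * ((ℓ:ℂ) - k) / c k)) • (b' j * b (k+1)) else 0)
            - (if k+1 = j then ((2*(j:ℂ)-ℓ-1) * ((k:ℂ) * ((ℓ:ℂ) - k) / c k)) • (b' k * b j) else 0)) := by
          refine Finset.sum_congr rfl fun j hj => ?_
          rw [key j hj j hj k hk0 (k+1) hk1, smul_sub]
          congr 1 <;> split_ifs <;> simp
      _ = ((-2 : ℂ) * ((k:ℂ) * ((ℓ:ℂ) - k) / c k)) • (b' k * b (k+1)) := by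
          rw [Finset.sum_sub_distrib, Finset.sum_ite_eq' S k, Finset.sum_ite_eq S (k+1),
            if_pos hk0, if_pos hk1, ← sub_smul]
          congr 1
          push_cast
          ring
  · -- [M, M'] = Z
    have tele_eq : ∑ k ∈ T, ((k:ℂ)*((ℓ:ℂ)-k)) • ((b' (k+1) * b (k+1)) - (b' k * b k))
        = ∑ k ∈ S, (2*(k:ℂ)-(ℓ:ℂ)-1) • (b' k * b k) := by
      obtain ⟨m, rfl⟩ : ∃ m, ℓ = m + 1 := ⟨ℓ - 1, by omega⟩
      rw [hT, hS]
      simp only [Nat.add_sub_cancel]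
      set F : ℕ → A := fun i => b' i * b i with hF
      set a : ℕ → ℂ := fun i => (i : ℂ) * ((m:ℂ) + 1 - i) with ha
      have L1 : ∑ k ∈ Finset.Icc 1 m, ((k:ℂ)*((↑(m+1):ℂ)-k)) • (F (k+1) - F k)
          = ∑ k ∈ Finset.range m, a (k+1) • (F (k+1+1) - F (k+1)) := by
        rw [← Finset.Ico_add_one_right_eq_Icc, Finset.sum_Ico_eq_sum_range]
        refine Finset.sum_congr (by norm_num) fun i _ => ?_
        have h1i : 1 + i = i + 1 := by omega
        rw [h1i, ha]
        congr 1
        push_cast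
        ring
      have L2 : ∑ k ∈ Finset.Icc 1 (m+1), (2*(k:ℂ)-(↑(m+1):ℂ)-1) • F k
          = ∑ k ∈ Finset.range (m+1), (2*(↑(k+1):ℂ)-(↑(m+1):ℂ)-1) • F (k+1) := by
        rw [← Finset.Ico_add_one_right_eq_Icc, Finset.sum_Ico_eq_sum_range]
        refine Finset.sum_congr (by norm_num) fun i _ => ?_
        have h1i : 1 + i = i + 1 := by omega
        rw [h1i]
      rw [L1, L2, car_tele m a F, Finset.sum_range_succ]
      have ha0 : a 0 = 0 := by simp [ha]
      have ham : a m • F (m+1) = (2*(↑(m+1):ℂ)-(↑(m+1):ℂ)-1) • F (m+1) := by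
        congr 1
        rw [ha]
        push_cast
        ring
      rw [ha0, zero_smul, sub_zero, ham]
      have hsum : -(∑ k ∈ Finset.range m, (a (k+1) - a k) • F (k+1))
          = ∑ k ∈ Finset.range m, (2*(↑(k+1):ℂ)-(↑(m+1):ℂ)-1) • F (k+1) := by
        rw [← Finset.sum_neg_distrib]
        refine Finset.sum_congr rfl fun k _ => ?_
        rw [← neg_smul]
        congr 1
        rw [ha]
        push_cast
        ring
      rw [sub_eq_add_neg, hsum]
      abel
    rw [hZ, ← tele_eq, hM, hM', car_expand]
    refine Finset.sum_congr rfl fun k hk => ?_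
    calc ∑ j ∈ T, (c j * ((k:ℂ) * ((ℓ:ℂ) - k) / c k)) •
          ((b' (j+1) * b j) * (b' k * b (k+1)) - (b' k * b (k+1)) * (b' (j+1) * b j))
        = ∑ j ∈ T, ((if j = k then (c j * ((k:ℂ) * ((ℓ:ℂ) - k) / c k)) • (b' (j+1) * b (k+1)) else 0)
            - (if k = j then (c j * ((k:ℂ) * ((ℓ:ℂ) - k) / c k)) • (b' k * b j) else 0)) := by
          refine Finset.sum_congr rfl fun j hj => ?_
          rw [key (j+1) (hT1 j hj) j (hTS j hj) k (hTS k hk) (k+1) (hT1 k hk), smul_sub]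
          congr 1
          · split_ifs <;> simp
          · simp only [add_left_inj]
            split_ifs <;> simp
      _ = ((k:ℂ)*((ℓ:ℂ)-k)) • ((b' (k+1) * b (k+1)) - (b' k * b k)) := by
          have hck := hc k hk
          rw [Finset.sum_sub_distrib, Finset.sum_ite_eq' T k, Finset.sum_ite_eq T k,
            if_pos hk, if_pos hk,
            show c k * ((k:ℂ) * ((ℓ:ℂ) - k) / c k) = (k:ℂ)*((ℓ:ℂ)-k) from by
              field_simp, smul_sub]
end

section
/- The nilpotent shift map M_{ℓ,m}^r : V_{ℓ,m}^r → V_{ℓ,m}^{r+1} is injective whenever r ≤ ⌊(m(ℓ-m)-1)/2⌋. -/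
open Finset

/-- Number of ways to obtain the configuration `T` from `S` by moving one
occupied site `k ∈ S` to `k+1` (allowed when `k+1` is still a site and `k+1 ∉ S`).
Sites are the elements of `Fin ℓ`, thought of as sites `1,…,ℓ` via `k ↦ k+1`.
(Uses classical decidability.) -/
noncomputable def moveCount {ℓ : ℕ} (S T : Finset (Fin ℓ)) : ℕ := by
  classical
  exact (S.filter (fun k => ∃ h : k.val + 1 < ℓ,
      (⟨k.val + 1, h⟩ : Fin ℓ) ∉ S ∧
      T = insert (⟨k.val + 1, h⟩ : Fin ℓ) (S.erase k))).card

/-- The nilpotent shift operator `M` on the space spanned by all occupation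
configurations: a configuration `S` is sent to the sum of all configurations
obtained by moving one particle one site to the right. -/
noncomputable def MFull (ℓ : ℕ) :
    (Finset (Fin ℓ) → ℂ) →ₗ[ℂ] (Finset (Fin ℓ) → ℂ) where
  toFun f := fun T => ∑ S : Finset (Fin ℓ), (moveCount S T : ℂ) * f S
  map_add' f g := by
    funext T
    simp [Pi.add_apply, mul_add, Finset.sum_add_distrib]
  map_smul' c f := by
    funext T
    simp only [Pi.smul_apply, smul_eq_mul, RingHom.id_apply, Finset.mul_sum]
    exact Finset.sum_congr rfl fun S _ => by ring

/-- `Vw ℓ m r` : the weight space `V_{ℓ,m}^r`, spanned by the configurations of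
`m` particles with weight `r`, i.e. subsets `S` of the `ℓ` sites with
`|S| = m` and `Σ_{k∈S} k = r + m(m+1)/2` (sites labelled `1,…,ℓ`). -/
noncomputable def Vw (ℓ m r : ℕ) : Submodule ℂ (Finset (Fin ℓ) → ℂ) where
  carrier := {f | ∀ S, f S ≠ 0 → S.card = m ∧ ∑ k ∈ S, (k.val + 1) = r + m * (m + 1) / 2}
  zero_mem' := by intro S hS; exact absurd rfl hS
  add_mem' := by
    intro f g hf hg S hS
    by_cases h : f S = 0
    · exact hg S (by simpa [h] using hS)
    · exact hf S h
  smul_mem' := by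
    intro c f hf S hS
    exact hf S (fun h => hS (by simp [h]))


namespace ShiftAux

variable {ℓ : ℕ}

noncomputable def w (ℓ : ℕ) (j : ℕ) : ℝ := (j : ℝ) * ((ℓ : ℝ) - (j : ℝ))

noncomputable def g (ℓ j : ℕ) : ℝ := ∏ i ∈ Finset.Ico 1 j, w ℓ i

noncomputable def d (S : Finset (Fin ℓ)) : ℝ := ∏ k ∈ S, g ℓ (k.val + 1)

lemma w_pos {i : ℕ} (h1 : 0 < i) (h2 : i < ℓ) : 0 < w ℓ i := by
  have : (i : ℝ) < ℓ := by exact_mod_cast h2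
  have : 0 < (ℓ : ℝ) - i := by linarith
  exact mul_pos (by exact_mod_cast h1) this

lemma w_zero : w ℓ 0 = 0 := by simp [w]

lemma w_ell : w ℓ ℓ = 0 := by simp [w]

lemma g_pos {j : ℕ} (h : j ≤ ℓ) : 0 < g ℓ j := by
  refine Finset.prod_pos fun i hi => ?_
  rw [Finset.mem_Ico] at hi
  exact w_pos hi.1 (lt_of_lt_of_le hi.2 h)

lemma g_succ {j : ℕ} (hj : 1 ≤ j) : g ℓ (j + 1) = g ℓ j * w ℓ j := by
  rw [g, g, Finset.prod_Ico_succ_top hj]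

lemma d_pos (S : Finset (Fin ℓ)) : 0 < d S := by
  exact Finset.prod_pos fun k _ => g_pos k.isLt

/-- total successor on `Fin ℓ` (junk value `k` when at the top). -/
def fsucc (k : Fin ℓ) : Fin ℓ := if h : k.val + 1 < ℓ then ⟨k.val + 1, h⟩ else k

/-- total predecessor on `Fin ℓ` (junk value `j` at the bottom). -/
def fpred (j : Fin ℓ) : Fin ℓ :=
  if h : 0 < j.val then ⟨j.val - 1, by omega⟩ else j

lemma fsucc_val {k : Fin ℓ} (h : k.val + 1 < ℓ) : (fsucc k).val = k.val + 1 := by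
  simp [fsucc, h]

lemma fpred_val {j : Fin ℓ} (h : 0 < j.val) : (fpred j).val = j.val - 1 := by
  simp [fpred, h]

lemma fpred_fsucc {k : Fin ℓ} (h : k.val + 1 < ℓ) : fpred (fsucc k) = k := by
  apply Fin.ext
  rw [fpred_val (by rw [fsucc_val h]; omega), fsucc_val h]
  omega

lemma fsucc_fpred {j : Fin ℓ} (h : 0 < j.val) : fsucc (fpred j) = j := by
  apply Fin.ext
  rw [fsucc_val (by rw [fpred_val h]; omega), fpred_val h]
  omega

open Classical in
/-- the occupied sites of `S` which can move one step to the right. -/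
noncomputable def movers (S : Finset (Fin ℓ)) : Finset (Fin ℓ) :=
  S.filter (fun k => k.val + 1 < ℓ ∧ fsucc k ∉ S)

open Classical in
/-- the occupied sites of `T` which can move one step to the left. -/
noncomputable def comovers (T : Finset (Fin ℓ)) : Finset (Fin ℓ) :=
  T.filter (fun j => 0 < j.val ∧ fpred j ∉ T)

/-- the result of moving `k` to the right. -/
def mv (S : Finset (Fin ℓ)) (k : Fin ℓ) : Finset (Fin ℓ) := insert (fsucc k) (S.erase k)

/-- the result of moving `j` to the left. -/
def bk (T : Finset (Fin ℓ)) (j : Fin ℓ) : Finset (Fin ℓ) := insert (fpred j) (T.erase j)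

open Classical in
lemma mem_movers {S : Finset (Fin ℓ)} {k : Fin ℓ} :
    k ∈ movers S ↔ k ∈ S ∧ k.val + 1 < ℓ ∧ fsucc k ∉ S := by
  simp [movers]

open Classical in
lemma mem_comovers {T : Finset (Fin ℓ)} {j : Fin ℓ} :
    j ∈ comovers T ↔ j ∈ T ∧ 0 < j.val ∧ fpred j ∉ T := by
  simp [comovers]


section Edges
variable {S T : Finset (Fin ℓ)} {k j : Fin ℓ}

lemma fsucc_ne (h : k.val + 1 < ℓ) : fsucc k ≠ k := by
  intro he
  have := fsucc_val h
  rw [he] at this; omega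

lemma fpred_ne (h : 0 < j.val) : fpred j ≠ j := by
  intro he
  have := fpred_val h
  rw [he] at this; omega

lemma not_mem_mv (hk : k ∈ movers S) : k ∉ mv S k := by
  rcases mem_movers.1 hk with ⟨hS, hlt, hns⟩
  simp only [mv, Finset.mem_insert, Finset.mem_erase]
  push_neg
  exact ⟨fun h => absurd h.symm (fsucc_ne hlt), fun h => absurd rfl h⟩

lemma bk_mv (hk : k ∈ movers S) : bk (mv S k) (fsucc k) = S := by
  rcases mem_movers.1 hk with ⟨hS, hlt, hns⟩
  have h1 : fsucc k ∉ S.erase k := fun h => hns (Finset.mem_of_mem_erase h)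
  rw [bk, mv, fpred_fsucc hlt, Finset.erase_insert h1, Finset.insert_erase hS]

lemma fsucc_mem_comovers (hk : k ∈ movers S) : fsucc k ∈ comovers (mv S k) := by
  rcases mem_movers.1 hk with ⟨hS, hlt, hns⟩
  refine mem_comovers.2 ⟨Finset.mem_insert_self _ _, ?_, ?_⟩
  · rw [fsucc_val hlt]; omega
  · rw [fpred_fsucc hlt]; exact not_mem_mv hk

lemma d_mv (hk : k ∈ movers S) : d (mv S k) = w ℓ (k.val + 1) * d S := by
  rcases mem_movers.1 hk with ⟨hS, hlt, hns⟩
  have h1 : fsucc k ∉ S.erase k := fun h => hns (Finset.mem_of_mem_erase h)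
  rw [mv, d, Finset.prod_insert h1, fsucc_val hlt]
  have : g ℓ (k.val + 1 + 1) = g ℓ (k.val + 1) * w ℓ (k.val + 1) := g_succ (by omega)
  rw [this]
  have h2 : d S = g ℓ (k.val + 1) * ∏ x ∈ S.erase k, g ℓ (x.val + 1) :=
    (Finset.mul_prod_erase S _ hS).symm
  rw [d] at h2 ⊢
  rw [h2]; ring

-- downward edge
lemma fpred_mem_bk (hj : j ∈ comovers T) : fpred j ∈ bk T j := Finset.mem_insert_self _ _

lemma not_mem_bk (hj : j ∈ comovers T) : j ∉ bk T j := by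
  rcases mem_comovers.1 hj with ⟨hT, hpos, hnp⟩
  simp only [bk, Finset.mem_insert, Finset.mem_erase]
  push_neg
  exact ⟨fun h => absurd h.symm (fpred_ne hpos), fun h => absurd rfl h⟩

lemma fpred_mem_movers (hj : j ∈ comovers T) : fpred j ∈ movers (bk T j) := by
  rcases mem_comovers.1 hj with ⟨hT, hpos, hnp⟩
  refine mem_movers.2 ⟨fpred_mem_bk hj, ?_, ?_⟩
  · rw [fpred_val hpos]
    have := j.isLt; omega
  · rw [fsucc_fpred hpos]; exact not_mem_bk hj

lemma mv_bk (hj : j ∈ comovers T) : mv (bk T j) (fpred j) = T := by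
  rcases mem_comovers.1 hj with ⟨hT, hpos, hnp⟩
  have h1 : fpred j ∉ T.erase j := fun h => hnp (Finset.mem_of_mem_erase h)
  rw [mv, bk, fsucc_fpred hpos, Finset.erase_insert h1, Finset.insert_erase hT]

lemma d_bk (hj : j ∈ comovers T) : d T = w ℓ j.val * d (bk T j) := by
  have h := d_mv (fpred_mem_movers hj)
  rw [mv_bk hj] at h
  rcases mem_comovers.1 hj with ⟨hT, hpos, hnp⟩
  rw [h, fpred_val hpos]
  congr 2
  omega

end Edges

open Classical in
lemma moveCount_eq (S T : Finset (Fin ℓ)) :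
    moveCount S T = ((movers S).filter (fun k => mv S k = T)).card := by
  classical
  unfold moveCount movers mv
  rw [Finset.filter_filter]
  congr 1
  apply Finset.filter_congr
  intro k hk
  have : ∀ (h : k.val + 1 < ℓ), (⟨k.val+1,h⟩ : Fin ℓ) = fsucc k := by
    intro h; simp [fsucc, h]
  constructor
  · rintro ⟨h, hns, hT⟩
    simp only [this h] at hns hT
    exact ⟨⟨h, hns⟩, hT.symm⟩
  · rintro ⟨⟨h, hns⟩, hT⟩
    refine ⟨h, ?_, ?_⟩
    · rw [this h]; exact hns
    · rw [this h]; exact hT.symm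

/-- the shift operator written as a sum over left-moves of the target. -/
lemma MFull_apply (f : Finset (Fin ℓ) → ℂ) (T : Finset (Fin ℓ)) :
    MFull ℓ f T = ∑ j ∈ comovers T, f (bk T j) := by
  classical
  show (∑ S : Finset (Fin ℓ), (moveCount S T : ℂ) * f S) = _
  have step1 : ∀ S : Finset (Fin ℓ), (moveCount S T : ℂ) * f S
      = ∑ k ∈ (movers S).filter (fun k => mv S k = T), f S := by
    intro S
    rw [moveCount_eq, Finset.sum_const, nsmul_eq_mul]
  simp_rw [step1]
  rw [← Finset.sum_sigma (Finset.univ : Finset (Finset (Fin ℓ)))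
      (fun S => (movers S).filter (fun k => mv S k = T)) (fun p => f p.1)]
  refine Finset.sum_nbij' (fun p => fsucc p.2) (fun j => ⟨bk T j, fpred j⟩) ?_ ?_ ?_ ?_ ?_
  · rintro ⟨S, k⟩ hp
    rw [Finset.mem_sigma] at hp
    rcases Finset.mem_filter.1 hp.2 with ⟨hk, hT⟩
    have := fsucc_mem_comovers hk
    rwa [hT] at this
  · intro j hj
    rw [Finset.mem_sigma]
    refine ⟨Finset.mem_univ _, Finset.mem_filter.2 ⟨fpred_mem_movers hj, mv_bk hj⟩⟩
  · rintro ⟨S, k⟩ hp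
    rw [Finset.mem_sigma] at hp
    rcases Finset.mem_filter.1 hp.2 with ⟨hk, hT⟩
    rcases mem_movers.1 hk with ⟨hS, hlt, hns⟩
    refine Sigma.ext ?_ (heq_of_eq ?_)
    · show bk T (fsucc k) = S
      rw [← hT, bk_mv hk]
    · show fpred (fsucc k) = k
      exact fpred_fsucc hlt
  · intro j hj
    rcases mem_comovers.1 hj with ⟨hT, hpos, hnp⟩
    exact fsucc_fpred hpos
  · rintro ⟨S, k⟩ hp
    rw [Finset.mem_sigma] at hp
    rcases Finset.mem_filter.1 hp.2 with ⟨hk, hT⟩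
    show f S = f (bk T (fsucc k))
    rw [← hT, bk_mv hk]

/-- the companion lowering operator. -/
noncomputable def Fop (f : Finset (Fin ℓ) → ℂ) (S : Finset (Fin ℓ)) : ℂ :=
  ∑ k ∈ movers S, (w ℓ (k.val + 1) : ℂ) * f (mv S k)

/-- adjointness of `MFull` and `Fop` for the weighted pairing. -/
lemma adjoint (φ ψ : Finset (Fin ℓ) → ℂ) :
    ∑ S : Finset (Fin ℓ), (d S : ℂ) * Fop φ S * ψ S
      = ∑ T : Finset (Fin ℓ), (d T : ℂ) * φ T * MFull ℓ ψ T := by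
  classical
  have lhs : ∀ S : Finset (Fin ℓ), (d S : ℂ) * Fop φ S * ψ S
      = ∑ k ∈ movers S, (d (mv S k) : ℂ) * φ (mv S k) * ψ S := by
    intro S
    rw [Fop, Finset.mul_sum, Finset.sum_mul]
    refine Finset.sum_congr rfl fun k hk => ?_
    rw [d_mv hk]
    push_cast
    ring
  have rhs : ∀ T : Finset (Fin ℓ), (d T : ℂ) * φ T * MFull ℓ ψ T
      = ∑ j ∈ comovers T, (d T : ℂ) * φ T * ψ (bk T j) := by
    intro T
    rw [MFull_apply, Finset.mul_sum]
  simp_rw [lhs, rhs]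
  rw [← Finset.sum_sigma (Finset.univ : Finset (Finset (Fin ℓ))) (fun S => movers S)
      (fun p => (d (mv p.1 p.2) : ℂ) * φ (mv p.1 p.2) * ψ p.1),
    ← Finset.sum_sigma (Finset.univ : Finset (Finset (Fin ℓ))) (fun T => comovers T)
      (fun p => (d p.1 : ℂ) * φ p.1 * ψ (bk p.1 p.2))]
  refine Finset.sum_nbij' (fun p => ⟨mv p.1 p.2, fsucc p.2⟩) (fun p => ⟨bk p.1 p.2, fpred p.2⟩)
    ?_ ?_ ?_ ?_ ?_
  · rintro ⟨S, k⟩ hp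
    rw [Finset.mem_sigma] at hp ⊢
    exact ⟨Finset.mem_univ _, fsucc_mem_comovers hp.2⟩
  · rintro ⟨T, j⟩ hp
    rw [Finset.mem_sigma] at hp ⊢
    exact ⟨Finset.mem_univ _, fpred_mem_movers hp.2⟩
  · rintro ⟨S, k⟩ hp
    rw [Finset.mem_sigma] at hp
    rcases mem_movers.1 hp.2 with ⟨hS, hlt, hns⟩
    exact Sigma.ext (bk_mv hp.2) (heq_of_eq (fpred_fsucc hlt))
  · rintro ⟨T, j⟩ hp
    rw [Finset.mem_sigma] at hp
    rcases mem_comovers.1 hp.2 with ⟨hT, hpos, hnp⟩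
    exact Sigma.ext (mv_bk hp.2) (heq_of_eq (fsucc_fpred hpos))
  · rintro ⟨S, k⟩ hp
    rw [Finset.mem_sigma] at hp
    show _ = (d (mv S k) : ℂ) * φ (mv S k) * ψ (bk (mv S k) (fsucc k))
    rw [bk_mv hp.2]

section Diamond
variable {T : Finset (Fin ℓ)} {k j : Fin ℓ}

lemma eq_fpred_of_fsucc_eq (hk : k.val + 1 < ℓ) (h : fsucc k = j) : k = fpred j := by
  have h1 : (fsucc k).val = k.val + 1 := fsucc_val hk
  rw [h] at h1
  have h2 : (fpred j).val = j.val - 1 := fpred_val (by omega)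
  apply Fin.ext
  omega

lemma fsucc_eq_of_eq_fpred (hj : 0 < j.val) (h : k = fpred j) : fsucc k = j := by
  rw [h]; exact fsucc_fpred hj

lemma diamond_up (hj : j ∈ comovers T) (hk : k ∈ movers (bk T j)) (hne : k ≠ fpred j) :
    k ∈ movers T ∧ j ∈ comovers (mv T k) ∧ j ≠ fsucc k ∧
      mv (bk T j) k = bk (mv T k) j := by
  rcases mem_comovers.1 hj with ⟨hjT, hjpos, hjp⟩
  rcases mem_movers.1 hk with ⟨hkS, hklt, hks⟩
  have hjs : j ≠ fsucc k := fun h => hne (eq_fpred_of_fsucc_eq hklt h.symm)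
  have hkT : k ∈ T := by
    rcases Finset.mem_insert.1 hkS with h | h
    · exact absurd h hne
    · exact Finset.mem_of_mem_erase h
  have hkj : k ≠ j := by
    rintro rfl
    exact (Finset.notMem_erase k T) (Finset.mem_of_mem_insert_of_ne hkS hne)
  have hsT : fsucc k ∉ T := by
    intro h
    exact hks (Finset.mem_insert_of_mem (Finset.mem_erase.2 ⟨fun he => hjs he.symm, h⟩))
  have hpS : fpred j ∈ bk T j := Finset.mem_insert_self _ _
  have hps : fpred j ≠ fsucc k := fun h => hks (h ▸ hpS)
  have hkM : k ∈ movers T := mem_movers.2 ⟨hkT, hklt, hsT⟩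
  refine ⟨hkM, ?_, hjs, ?_⟩
  · refine mem_comovers.2 ⟨?_, hjpos, ?_⟩
    · exact Finset.mem_insert_of_mem (Finset.mem_erase.2 ⟨hkj.symm, hjT⟩)
    · intro h
      rcases Finset.mem_insert.1 h with h | h
      · exact hps h
      · exact hjp (Finset.mem_of_mem_erase h)
  · rw [mv, bk, bk, mv, Finset.erase_insert_of_ne hne.symm,
      Finset.erase_insert_of_ne hjs.symm, Finset.insert_comm, Finset.erase_right_comm]

lemma diamond_down (hk : k ∈ movers T) (hj : j ∈ comovers (mv T k)) (hne : j ≠ fsucc k) :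
    j ∈ comovers T ∧ k ∈ movers (bk T j) ∧ k ≠ fpred j := by
  rcases mem_movers.1 hk with ⟨hkT, hklt, hks⟩
  rcases mem_comovers.1 hj with ⟨hjU, hjpos, hjp⟩
  have hnep : k ≠ fpred j := fun h => hne (fsucc_eq_of_eq_fpred hjpos h).symm
  have hjT : j ∈ T := Finset.mem_of_mem_erase (Finset.mem_of_mem_insert_of_ne hjU hne)
  have hkj : k ≠ j := by
    rintro rfl
    exact (not_mem_mv hk) hjU
  have hsU : fsucc k ∈ mv T k := Finset.mem_insert_self _ _
  have hps : fpred j ≠ fsucc k := fun h => hjp (h ▸ hsU)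
  have hpT : fpred j ∉ T := by
    intro h
    exact hjp (Finset.mem_insert_of_mem (Finset.mem_erase.2 ⟨fun he => hnep he.symm, h⟩))
  have hjC : j ∈ comovers T := mem_comovers.2 ⟨hjT, hjpos, hpT⟩
  refine ⟨hjC, ?_, hnep⟩
  refine mem_movers.2 ⟨?_, hklt, ?_⟩
  · exact Finset.mem_insert_of_mem (Finset.mem_erase.2 ⟨hkj, hkT⟩)
  · intro h
    rcases Finset.mem_insert.1 h with h | h
    · exact hps h.symm
    · exact hks (Finset.mem_of_mem_erase h)

end Diamond

/-- the diagonal coefficient: eigenvalue of the commutator `[M, F]`. -/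
noncomputable def hco (T : Finset (Fin ℓ)) : ℝ :=
  ∑ j ∈ T, (w ℓ j.val - w ℓ (j.val + 1))

open Classical in
lemma diag_sum (T : Finset (Fin ℓ)) :
    (∑ j ∈ comovers T, w ℓ j.val) - ∑ k ∈ movers T, w ℓ (k.val + 1) = hco T := by
  rw [hco, Finset.sum_sub_distrib]
  have c1 : ∑ j ∈ T, w ℓ j.val
      = (∑ j ∈ comovers T, w ℓ j.val)
        + ∑ j ∈ T.filter (fun j => 0 < j.val ∧ fpred j ∈ T), w ℓ j.val := by
    rw [← Finset.sum_filter_add_sum_filter_not T (fun j => 0 < j.val ∧ fpred j ∉ T)]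
    congr 1
    refine (Finset.sum_subset ?_ ?_).symm
    · intro x hx
      rcases Finset.mem_filter.1 hx with ⟨hxT, h1, h2⟩
      exact Finset.mem_filter.2 ⟨hxT, fun hc => hc.2 h2⟩
    · intro x hx hnx
      rcases Finset.mem_filter.1 hx with ⟨hxT, hP⟩
      have : ¬ 0 < x.val := by
        intro hpos
        by_cases hc : fpred x ∈ T
        · exact hnx (Finset.mem_filter.2 ⟨hxT, hpos, hc⟩)
        · exact hP ⟨hpos, hc⟩
      have : x.val = 0 := by omega
      rw [this, w_zero]
  have c2 : ∑ k ∈ T, w ℓ (k.val + 1)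
      = (∑ k ∈ movers T, w ℓ (k.val + 1))
        + ∑ k ∈ T.filter (fun k => k.val + 1 < ℓ ∧ fsucc k ∈ T), w ℓ (k.val + 1) := by
    rw [← Finset.sum_filter_add_sum_filter_not T (fun k => k.val + 1 < ℓ ∧ fsucc k ∉ T)]
    congr 1
    refine (Finset.sum_subset ?_ ?_).symm
    · intro x hx
      rcases Finset.mem_filter.1 hx with ⟨hxT, h1, h2⟩
      exact Finset.mem_filter.2 ⟨hxT, fun hc => hc.2 h2⟩
    · intro x hx hnx
      rcases Finset.mem_filter.1 hx with ⟨hxT, hP⟩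
      have hlt : ¬ x.val + 1 < ℓ := by
        intro hpos
        by_cases hc : fsucc x ∈ T
        · exact hnx (Finset.mem_filter.2 ⟨hxT, hpos, hc⟩)
        · exact hP ⟨hpos, hc⟩
      have : x.val + 1 = ℓ := by have := x.isLt; omega
      rw [this, w_ell]
  have c3 : ∑ j ∈ T.filter (fun j => 0 < j.val ∧ fpred j ∈ T), w ℓ j.val
      = ∑ k ∈ T.filter (fun k => k.val + 1 < ℓ ∧ fsucc k ∈ T), w ℓ (k.val + 1) := by
    refine Finset.sum_nbij' (fun j => fpred j) (fun k => fsucc k) ?_ ?_ ?_ ?_ ?_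
    · intro x hx
      rcases Finset.mem_filter.1 hx with ⟨hxT, hpos, hmem⟩
      refine Finset.mem_filter.2 ⟨hmem, ?_, ?_⟩
      · rw [fpred_val hpos]; have := x.isLt; omega
      · rw [fsucc_fpred hpos]; exact hxT
    · intro x hx
      rcases Finset.mem_filter.1 hx with ⟨hxT, hlt, hmem⟩
      refine Finset.mem_filter.2 ⟨hmem, ?_, ?_⟩
      · rw [fsucc_val hlt]; omega
      · rw [fpred_fsucc hlt]; exact hxT
    · intro x hx
      rcases Finset.mem_filter.1 hx with ⟨hxT, hpos, hmem⟩
      exact fsucc_fpred hpos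
    · intro x hx
      rcases Finset.mem_filter.1 hx with ⟨hxT, hlt, hmem⟩
      exact fpred_fsucc hlt
    · intro x hx
      rcases Finset.mem_filter.1 hx with ⟨hxT, hpos, hmem⟩
      rw [fpred_val hpos]
      congr 1
      omega
  rw [c1, c2, c3]
  ring

/-- the key commutator identity `[M, F] = hco` as a pointwise statement. -/
lemma commutator (f : Finset (Fin ℓ) → ℂ) (T : Finset (Fin ℓ)) :
    MFull ℓ (Fop f) T = Fop (MFull ℓ f) T + (hco T : ℂ) * f T := by
  classical
  rw [MFull_apply]
  have lhs : ∀ j ∈ comovers T, Fop f (bk T j)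
      = (w ℓ j.val : ℂ) * f T
        + ∑ k ∈ (movers (bk T j)).erase (fpred j),
            (w ℓ (k.val + 1) : ℂ) * f (mv (bk T j) k) := by
    intro j hj
    rcases mem_comovers.1 hj with ⟨hjT, hjpos, hjp⟩
    have hv : (fpred j).val + 1 = j.val := by rw [fpred_val hjpos]; omega
    rw [Fop, ← Finset.add_sum_erase _ _ (fpred_mem_movers hj), mv_bk hj, hv]
  have rhs : ∀ k ∈ movers T, (MFull ℓ f) (mv T k)
      = f T + ∑ i ∈ (comovers (mv T k)).erase (fsucc k), f (bk (mv T k) i) := by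
    intro k hk
    rw [MFull_apply, ← Finset.add_sum_erase _ _ (fsucc_mem_comovers hk), bk_mv hk]
  rw [Finset.sum_congr rfl lhs, Finset.sum_add_distrib]
  have rhs2 : Fop (MFull ℓ f) T
      = (∑ k ∈ movers T, (w ℓ (k.val + 1) : ℂ) * f T)
        + ∑ k ∈ movers T, ∑ i ∈ (comovers (mv T k)).erase (fsucc k),
            (w ℓ (k.val + 1) : ℂ) * f (bk (mv T k) i) := by
    rw [Fop, Finset.sum_congr rfl (fun k hk => by rw [rhs k hk])]
    rw [← Finset.sum_add_distrib]
    congr 1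
    funext k
    rw [mul_add, Finset.mul_sum]
  rw [rhs2]
  have offdiag : ∑ j ∈ comovers T, ∑ k ∈ (movers (bk T j)).erase (fpred j),
        (w ℓ (k.val + 1) : ℂ) * f (mv (bk T j) k)
      = ∑ k ∈ movers T, ∑ i ∈ (comovers (mv T k)).erase (fsucc k),
          (w ℓ (k.val + 1) : ℂ) * f (bk (mv T k) i) := by
    rw [← Finset.sum_sigma (comovers T) (fun j => (movers (bk T j)).erase (fpred j))
        (fun p => (w ℓ (p.2.val + 1) : ℂ) * f (mv (bk T p.1) p.2)),
      ← Finset.sum_sigma (movers T) (fun k => (comovers (mv T k)).erase (fsucc k))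
        (fun p => (w ℓ (p.1.val + 1) : ℂ) * f (bk (mv T p.1) p.2))]
    refine Finset.sum_nbij' (fun p => ⟨p.2, p.1⟩) (fun p => ⟨p.2, p.1⟩) ?_ ?_ ?_ ?_ ?_
    · rintro ⟨j, k⟩ hp
      rw [Finset.mem_sigma] at hp
      obtain ⟨hj, hk'⟩ := hp
      rcases Finset.mem_erase.1 hk' with ⟨hne, hk⟩
      obtain ⟨h1, h2, h3, _⟩ := diamond_up hj hk hne
      rw [Finset.mem_sigma]
      exact ⟨h1, Finset.mem_erase.2 ⟨h3, h2⟩⟩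
    · rintro ⟨k, j⟩ hp
      rw [Finset.mem_sigma] at hp
      obtain ⟨hk, hj'⟩ := hp
      rcases Finset.mem_erase.1 hj' with ⟨hne, hj⟩
      obtain ⟨h1, h2, h3⟩ := diamond_down hk hj hne
      rw [Finset.mem_sigma]
      exact ⟨h1, Finset.mem_erase.2 ⟨h3, h2⟩⟩
    · rintro ⟨j, k⟩ _; rfl
    · rintro ⟨k, j⟩ _; rfl
    · rintro ⟨j, k⟩ hp
      rw [Finset.mem_sigma] at hp
      obtain ⟨hj, hk'⟩ := hp
      rcases Finset.mem_erase.1 hk' with ⟨hne, hk⟩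
      obtain ⟨_, _, _, heq⟩ := diamond_up hj hk hne
      show (w ℓ (k.val + 1) : ℂ) * f (mv (bk T j) k) = (w ℓ (k.val + 1) : ℂ) * f (bk (mv T k) j)
      rw [heq]
  rw [offdiag]
  have diag : ∑ j ∈ comovers T, (w ℓ j.val : ℂ) * f T
      = (∑ k ∈ movers T, (w ℓ (k.val + 1) : ℂ) * f T) + (hco T : ℂ) * f T := by
    have := diag_sum T
    have h1 : ((∑ j ∈ comovers T, w ℓ j.val : ℝ) : ℂ)
        = ((∑ k ∈ movers T, w ℓ (k.val + 1) : ℝ) : ℂ) + ((hco T : ℝ) : ℂ) := by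
      rw [← Complex.ofReal_add]
      congr 1
      linarith
    rw [← Finset.sum_mul, ← Finset.sum_mul, ← add_mul]
    push_cast at h1 ⊢
    rw [h1]
  rw [diag]
  ring

lemma hco_eq {m r : ℕ} {T : Finset (Fin ℓ)} (hcard : T.card = m)
    (hsum : ∑ k ∈ T, (k.val + 1) = r + m * (m + 1) / 2) :
    hco T = 2 * (r : ℝ) + (m : ℝ) * m - (m : ℝ) * ℓ := by
  have heven : (m * (m + 1) / 2) * 2 = m * (m + 1) :=
    Nat.div_mul_cancel (Nat.even_mul_succ_self m).two_dvd
  have key : 2 * (∑ k ∈ T, (k.val + 1)) = 2 * r + m * (m + 1) := by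
    rw [hsum]; omega
  have keyR : ((2 * ∑ k ∈ T, (k.val + 1) : ℕ) : ℝ) = ((2 * r + m * (m + 1) : ℕ) : ℝ) := by
    exact_mod_cast key
  push_cast at keyR
  have hw : ∀ j : Fin ℓ, w ℓ j.val - w ℓ (j.val + 1)
      = 2 * ((j.val : ℝ) + 1) - (1 + ℓ) := by
    intro j; unfold w; push_cast; ring
  calc hco T = ∑ j ∈ T, (2 * ((j.val : ℝ) + 1) - (1 + ℓ)) :=
        Finset.sum_congr rfl fun j _ => hw j
    _ = (∑ j ∈ T, 2 * ((j.val : ℝ) + 1)) - ∑ _j ∈ T, ((1 : ℝ) + ℓ) :=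
        Finset.sum_sub_distrib _ _
    _ = 2 * (∑ j ∈ T, ((j.val : ℝ) + 1)) - T.card * (1 + ℓ) := by
        rw [Finset.mul_sum, Finset.sum_const, nsmul_eq_mul]
    _ = 2 * (r : ℝ) + (m : ℝ) * m - (m : ℝ) * ℓ := by
        rw [hcard]; linarith

end ShiftAux

/-- the restriction `M_{ℓ,m}^r : V_{ℓ,m}^r → V_{ℓ,m}^{r+1}` of the
shift map is injective whenever `r ≤ ⌊(m(ℓ-m)-1)/2⌋`, i.e. `2r + 1 ≤ m(ℓ-m)`. -/
theorem shift_injective_on_low_weight (ℓ m r : ℕ) (hm : m ≤ ℓ)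
    (hr : 2 * r + 1 ≤ m * (ℓ - m)) :
    ∀ f ∈ Vw ℓ m r, MFull ℓ f = 0 → f = 0 := by
  classical
  intro f hf hMf
  have hsupp : ∀ S : Finset (Fin ℓ), f S ≠ 0 →
      S.card = m ∧ ∑ k ∈ S, (k.val + 1) = r + m * (m + 1) / 2 := hf
  -- the weight `hco T` is very negative on the support of `f`
  have hneg : ∀ T : Finset (Fin ℓ), f T ≠ 0 → ShiftAux.hco T ≤ -1 := by
    intro T hT
    obtain ⟨hcard, hsum⟩ := hsupp T hT
    rw [ShiftAux.hco_eq hcard hsum]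
    have hcast : ((m * (ℓ - m) : ℕ) : ℝ) = (m : ℝ) * ℓ - (m : ℝ) * m := by
      rw [Nat.cast_mul, Nat.cast_sub hm]; ring
    have hrR : ((2 * r + 1 : ℕ) : ℝ) ≤ ((m * (ℓ - m) : ℕ) : ℝ) := by exact_mod_cast hr
    rw [hcast] at hrR
    push_cast at hrR
    linarith
  -- `M f = 0`, hence `F (M f) = 0`, hence `M (F f) = hco • f`
  have hM0 : ∀ T, MFull ℓ f T = 0 := fun T => congrFun hMf T
  have hFM0 : ∀ S, ShiftAux.Fop (MFull ℓ f) S = 0 := by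
    intro S
    rw [ShiftAux.Fop]
    exact Finset.sum_eq_zero fun k _ => by rw [hM0, mul_zero]
  have hB : ∀ T, MFull ℓ (ShiftAux.Fop f) T = (ShiftAux.hco T : ℂ) * f T := by
    intro T
    rw [ShiftAux.commutator, hFM0, zero_add]
  -- adjointness, applied to the conjugate of `f`
  have hconj : ∀ S, ShiftAux.Fop (fun U => (starRingEnd ℂ) (f U)) S
      = (starRingEnd ℂ) (ShiftAux.Fop f S) := by
    intro S
    rw [ShiftAux.Fop, ShiftAux.Fop, map_sum]
    exact Finset.sum_congr rfl fun k _ => by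
      rw [map_mul, Complex.conj_ofReal]
  have hadj := ShiftAux.adjoint (fun U => (starRingEnd ℂ) (f U)) (ShiftAux.Fop f)
  have hmulconj : ∀ z : ℂ, (starRingEnd ℂ) z * z = (Complex.normSq z : ℂ) := by
    intro z; rw [mul_comm, Complex.mul_conj]
  have hL : ∀ S : Finset (Fin ℓ),
      (ShiftAux.d S : ℂ) * ShiftAux.Fop (fun U => (starRingEnd ℂ) (f U)) S
          * ShiftAux.Fop f S
        = ((ShiftAux.d S * Complex.normSq (ShiftAux.Fop f S) : ℝ) : ℂ) := by
    intro S
    rw [hconj, mul_assoc, hmulconj]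
    push_cast
    ring
  have hR : ∀ T : Finset (Fin ℓ),
      (ShiftAux.d T : ℂ) * (starRingEnd ℂ) (f T) * MFull ℓ (ShiftAux.Fop f) T
        = ((ShiftAux.d T * ShiftAux.hco T * Complex.normSq (f T) : ℝ) : ℂ) := by
    intro T
    rw [hB]
    calc (ShiftAux.d T : ℂ) * (starRingEnd ℂ) (f T) * ((ShiftAux.hco T : ℂ) * f T)
        = (ShiftAux.d T : ℂ) * (ShiftAux.hco T : ℂ) * (f T * (starRingEnd ℂ) (f T)) := by ring
      _ = ((ShiftAux.d T * ShiftAux.hco T * Complex.normSq (f T) : ℝ) : ℂ) := by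
          rw [Complex.mul_conj]; push_cast; ring
  rw [Finset.sum_congr rfl fun S _ => hL S, Finset.sum_congr rfl fun T _ => hR T,
    ← Complex.ofReal_sum, ← Complex.ofReal_sum] at hadj
  have hreal : ∑ S : Finset (Fin ℓ), ShiftAux.d S * Complex.normSq (ShiftAux.Fop f S)
      = ∑ T : Finset (Fin ℓ), ShiftAux.d T * ShiftAux.hco T * Complex.normSq (f T) :=
    Complex.ofReal_inj.1 hadj
  have hApos : 0 ≤ ∑ S : Finset (Fin ℓ), ShiftAux.d S * Complex.normSq (ShiftAux.Fop f S) :=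
    Finset.sum_nonneg fun S _ =>
      mul_nonneg (le_of_lt (ShiftAux.d_pos S)) (Complex.normSq_nonneg _)
  have hterm : ∀ T : Finset (Fin ℓ),
      ShiftAux.d T * ShiftAux.hco T * Complex.normSq (f T) ≤ 0 := by
    intro T
    by_cases h : f T = 0
    · simp [h]
    · have h1 := ShiftAux.d_pos T
      have h2 := hneg T h
      have h3 := Complex.normSq_nonneg (f T)
      have hdn : 0 ≤ ShiftAux.d T * Complex.normSq (f T) := mul_nonneg h1.le h3
      calc ShiftAux.d T * ShiftAux.hco T * Complex.normSq (f T)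
          = ShiftAux.hco T * (ShiftAux.d T * Complex.normSq (f T)) := by ring
        _ ≤ 0 := mul_nonpos_iff.2 (Or.inr ⟨by linarith, hdn⟩)
  have hzero : ∑ T : Finset (Fin ℓ), ShiftAux.d T * ShiftAux.hco T * Complex.normSq (f T) = 0 := by
    have h1 : (0:ℝ) ≤ ∑ T : Finset (Fin ℓ),
        ShiftAux.d T * ShiftAux.hco T * Complex.normSq (f T) := hreal ▸ hApos
    have h2 : ∑ T : Finset (Fin ℓ), ShiftAux.d T * ShiftAux.hco T * Complex.normSq (f T) ≤ 0 :=
      Finset.sum_nonpos fun T _ => hterm T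
    linarith
  have hall := (Finset.sum_eq_zero_iff_of_nonpos fun T _ => hterm T).1 hzero
  funext T
  show f T = 0
  by_contra h
  have h1 := ShiftAux.d_pos T
  have h2 := hneg T h
  have h3 : 0 < Complex.normSq (f T) := Complex.normSq_pos.2 h
  have h4 := hall T (Finset.mem_univ T)
  have h5 : ShiftAux.d T * ShiftAux.hco T * Complex.normSq (f T) < 0 := by
    calc ShiftAux.d T * ShiftAux.hco T * Complex.normSq (f T)
        = ShiftAux.hco T * (ShiftAux.d T * Complex.normSq (f T)) := by ring
      _ < 0 := mul_neg_of_neg_of_pos (by linarith) (mul_pos h1 h3)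
  linarith
end

section
/- The nilpotent shift map M_{ℓ,m}^r : V_{ℓ,m}^r → V_{ℓ,m}^{r+1} is surjective whenever r ≥ ⌊m(ℓ-m)/2⌋. -/
open Finset

section Aux

variable {ℓ : ℕ}

/-- Pullback operator of the elementary move `a → b`. -/
noncomputable def hop (a b : Fin ℓ) (f : Finset (Fin ℓ) → ℂ) :
    Finset (Fin ℓ) → ℂ :=
  fun T => if b ∈ T ∧ a ∉ T then f (insert a (T.erase b)) else 0

/-- successor inside `Fin ℓ` (identity at the right boundary). -/
def fsucc (a : Fin ℓ) : Fin ℓ := if h : a.val + 1 < ℓ then ⟨a.val + 1, h⟩ else a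

lemma fsucc_of_lt {a : Fin ℓ} (h : a.val + 1 < ℓ) : fsucc a = ⟨a.val + 1, h⟩ := dif_pos h

lemma fsucc_of_ge {a : Fin ℓ} (h : ¬ a.val + 1 < ℓ) : fsucc a = a := dif_neg h

lemma fsucc_val {a : Fin ℓ} (h : a.val + 1 < ℓ) : (fsucc a).val = a.val + 1 := by
  rw [fsucc_of_lt h]

lemma hop_self (a : Fin ℓ) (f : Finset (Fin ℓ) → ℂ) (T : Finset (Fin ℓ)) :
    hop a a f T = 0 := by
  simp only [hop]
  rw [if_neg]
  rintro ⟨h1, h2⟩; exact h2 h1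

lemma hop_sum {ι : Type*} (s : Finset ι) (F : ι → Finset (Fin ℓ) → ℂ)
    (a b : Fin ℓ) (T : Finset (Fin ℓ)) :
    hop a b (fun X => ∑ i ∈ s, F i X) T = ∑ i ∈ s, hop a b (F i) T := by
  simp only [hop]
  split_ifs with h
  · rfl
  · simp

lemma hop_mul_left (c : ℂ) (f : Finset (Fin ℓ) → ℂ) (a b : Fin ℓ) (T : Finset (Fin ℓ)) :
    hop a b (fun X => c * f X) T = c * hop a b f T := by
  simp only [hop]
  split_ifs with h
  · rfl
  · simp

/-- hop coefficients for the lowering operator. -/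
def dcoef (ℓ : ℕ) (b : Fin ℓ) : ℕ := (b.val + 1) * (ℓ - 1 - b.val)

/-- The lowering operator `F`. -/
noncomputable def Fop (ℓ : ℕ) :
    (Finset (Fin ℓ) → ℂ) →ₗ[ℂ] (Finset (Fin ℓ) → ℂ) where
  toFun f := fun T => ∑ b : Fin ℓ, (dcoef ℓ b : ℂ) * hop (fsucc b) b f T
  map_add' f g := by
    funext T
    simp only [Pi.add_apply, hop, ← Finset.sum_add_distrib]
    refine Finset.sum_congr rfl fun b _ => ?_
    split_ifs with h
    · ring
    · ring
  map_smul' c f := by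
    funext T
    simp only [Pi.smul_apply, smul_eq_mul, RingHom.id_apply, Finset.mul_sum, hop]
    refine Finset.sum_congr rfl fun b _ => ?_
    split_ifs with h
    · ring
    · ring


open Classical in
lemma moveCount_cast_mul (f : Finset (Fin ℓ) → ℂ) (S T : Finset (Fin ℓ)) :
    (moveCount S T : ℂ) * f S =
      ∑ a : Fin ℓ, if (a ∈ S ∧ ∃ h : a.val + 1 < ℓ,
          (⟨a.val + 1, h⟩ : Fin ℓ) ∉ S ∧
          T = insert (⟨a.val + 1, h⟩ : Fin ℓ) (S.erase a)) then f S else 0 := by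
  classical
  have h1 : moveCount S T = ∑ a : Fin ℓ, if (a ∈ S ∧ ∃ h : a.val + 1 < ℓ,
      (⟨a.val + 1, h⟩ : Fin ℓ) ∉ S ∧
      T = insert (⟨a.val + 1, h⟩ : Fin ℓ) (S.erase a)) then 1 else 0 := by
    unfold moveCount
    rw [show (S.filter (fun k => ∃ h : k.val + 1 < ℓ,
        (⟨k.val + 1, h⟩ : Fin ℓ) ∉ S ∧
        T = insert (⟨k.val + 1, h⟩ : Fin ℓ) (S.erase k))) =
      (Finset.univ.filter (fun a => a ∈ S ∧ ∃ h : a.val + 1 < ℓ,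
        (⟨a.val + 1, h⟩ : Fin ℓ) ∉ S ∧
        T = insert (⟨a.val + 1, h⟩ : Fin ℓ) (S.erase a))) from by
        ext a; simp [and_assoc]]
    rw [Finset.card_filter]
  rw [h1]
  push_cast
  rw [Finset.sum_mul]
  refine Finset.sum_congr rfl fun a _ => ?_
  split_ifs with h
  · ring
  · ring

open Classical in
lemma hop_sum_eval (f : Finset (Fin ℓ) → ℂ) (T : Finset (Fin ℓ)) (a : Fin ℓ) :
    (∑ S : Finset (Fin ℓ), if (a ∈ S ∧ ∃ h : a.val + 1 < ℓ,
        (⟨a.val + 1, h⟩ : Fin ℓ) ∉ S ∧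
        T = insert (⟨a.val + 1, h⟩ : Fin ℓ) (S.erase a)) then f S else 0) =
      hop a (fsucc a) f T := by
  classical
  by_cases ha : a.val + 1 < ℓ
  · set b : Fin ℓ := ⟨a.val + 1, ha⟩ with hb
    have hab : a ≠ b := by
      intro h
      have := congrArg Fin.val h
      simp [hb] at this
    have hcond : ∀ S : Finset (Fin ℓ),
        ((a ∈ S ∧ ∃ h : a.val + 1 < ℓ,
          (⟨a.val + 1, h⟩ : Fin ℓ) ∉ S ∧
          T = insert (⟨a.val + 1, h⟩ : Fin ℓ) (S.erase a)) ↔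
        (a ∈ S ∧ b ∉ S ∧ T = insert b (S.erase a))) := by
      intro S
      constructor
      · rintro ⟨h1, h2, h3, h4⟩; exact ⟨h1, h3, h4⟩
      · rintro ⟨h1, h3, h4⟩; exact ⟨h1, ha, h3, h4⟩
    rw [fsucc_of_lt ha, ← hb, hop]
    by_cases hT : b ∈ T ∧ a ∉ T
    · rw [if_pos hT]
      rw [Finset.sum_eq_single (insert a (T.erase b))]
      · rw [if_pos]
        rw [hcond]
        refine ⟨Finset.mem_insert_self _ _, ?_, ?_⟩
        · intro hbmem
          rcases Finset.mem_insert.mp hbmem with h | h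
          · exact hab h.symm
          · exact (Finset.notMem_erase b T) h
        · rw [Finset.erase_insert]
          · rw [Finset.insert_erase hT.1]
          · intro hmem
            exact hT.2 (Finset.mem_of_mem_erase hmem)
      · intro S _ hS
        rw [if_neg]
        rw [hcond]
        rintro ⟨h1, h3, h4⟩
        apply hS
        have : S.erase a = T.erase b := by
          rw [h4, Finset.erase_insert]
          intro hmem
          exact h3 (Finset.mem_of_mem_erase hmem)
        rw [← this, Finset.insert_erase h1]
      · intro h; exact absurd (Finset.mem_univ _) h
    · rw [if_neg hT]
      apply Finset.sum_eq_zero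
      intro S _
      rw [if_neg]
      rw [hcond]
      rintro ⟨h1, h3, h4⟩
      apply hT
      constructor
      · rw [h4]; exact Finset.mem_insert_self _ _
      · rw [h4]
        intro hmem
        rcases Finset.mem_insert.mp hmem with h | h
        · exact hab h
        · exact (Finset.notMem_erase a S) h
  · have hfs : fsucc a = a := dif_neg ha
    rw [hfs, hop_self]
    apply Finset.sum_eq_zero
    intro S _
    rw [if_neg]
    rintro ⟨-, h, -⟩
    exact ha h

lemma ite_ite_zero (c1 c2 : Prop) [Decidable c1] [Decidable c2] (x : ℂ) :
    (if c1 then (if c2 then x else 0) else 0) = if c1 ∧ c2 then x else 0 := by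
  split_ifs <;> tauto

/-- off-diagonal commutation of hops -/
lemma comm_offdiag (a b : Fin ℓ) (hab : a ≠ b) (f : Finset (Fin ℓ) → ℂ)
    (T : Finset (Fin ℓ)) :
    hop a (fsucc a) (hop (fsucc b) b f) T = hop (fsucc b) b (hop a (fsucc a) f) T := by
  by_cases ha : a.val + 1 < ℓ
  · by_cases hb : b.val + 1 < ℓ
    · rw [fsucc_of_lt ha, fsucc_of_lt hb]
      set a' : Fin ℓ := ⟨a.val + 1, ha⟩ with ha'
      set b' : Fin ℓ := ⟨b.val + 1, hb⟩ with hb'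
      have haa' : a ≠ a' := fun h => by simpa [ha'] using congrArg Fin.val h
      have hbb' : b ≠ b' := fun h => by simpa [hb'] using congrArg Fin.val h
      have ha'b' : a' ≠ b' := fun h => by
        apply hab
        have := congrArg Fin.val h
        simp only [ha', hb'] at this
        exact Fin.ext (by omega)
      simp only [hop]
      rw [ite_ite_zero, ite_ite_zero]
      have l1 : ((a' ∈ T ∧ a ∉ T) ∧
          b ∈ insert a (T.erase a') ∧ b' ∉ insert a (T.erase a')) ↔
          (a' ∈ T ∧ a ∉ T ∧ b ∈ T ∧ b' ∉ T ∧ b ≠ a' ∧ a ≠ b') := by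
        constructor
        · rintro ⟨⟨h1, h2⟩, hb1, hb2⟩
          rcases Finset.mem_insert.mp hb1 with h | h
          · exact absurd h.symm hab
          · refine ⟨h1, h2, (Finset.mem_erase.mp h).2, ?_, (Finset.mem_erase.mp h).1, ?_⟩
            · intro hb'T
              exact hb2 (Finset.mem_insert_of_mem (Finset.mem_erase.mpr ⟨Ne.symm ha'b', hb'T⟩))
            · intro h'
              apply hb2
              rw [← h']
              exact Finset.mem_insert_self a _
        · rintro ⟨h1, h2, h3, h4, h5, h6⟩
          refine ⟨⟨h1, h2⟩, Finset.mem_insert_of_mem (Finset.mem_erase.mpr ⟨h5, h3⟩), ?_⟩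
          intro hmem
          rcases Finset.mem_insert.mp hmem with h | h
          · exact h6 h.symm
          · exact h4 (Finset.mem_of_mem_erase h)
      have l2 : ((b ∈ T ∧ b' ∉ T) ∧
          a' ∈ insert b' (T.erase b) ∧ a ∉ insert b' (T.erase b)) ↔
          (a' ∈ T ∧ a ∉ T ∧ b ∈ T ∧ b' ∉ T ∧ b ≠ a' ∧ a ≠ b') := by
        constructor
        · rintro ⟨⟨h1, h2⟩, ha1, ha2⟩
          rcases Finset.mem_insert.mp ha1 with h | h
          · exact absurd h ha'b'
          · refine ⟨(Finset.mem_erase.mp h).2, ?_, h1, h2, fun h' => (Finset.mem_erase.mp h).1 h'.symm, ?_⟩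
            · intro haT
              exact ha2 (Finset.mem_insert_of_mem (Finset.mem_erase.mpr ⟨hab, haT⟩))
            · intro h'
              apply ha2
              rw [h']
              exact Finset.mem_insert_self b' _
        · rintro ⟨h1, h2, h3, h4, h5, h6⟩
          refine ⟨⟨h3, h4⟩, Finset.mem_insert_of_mem (Finset.mem_erase.mpr ⟨fun h => h5 h.symm, h1⟩), ?_⟩
          intro hmem
          rcases Finset.mem_insert.mp hmem with h | h
          · exact h6 h
          · exact h2 (Finset.mem_of_mem_erase h)
      by_cases hC : a' ∈ T ∧ a ∉ T ∧ b ∈ T ∧ b' ∉ T ∧ b ≠ a' ∧ a ≠ b'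
      · rw [if_pos (l1.mpr hC), if_pos (l2.mpr hC)]
        obtain ⟨h1, h2, h3, h4, h5, h6⟩ := hC
        congr 1
        rw [Finset.erase_insert_of_ne hab, Finset.erase_insert_of_ne (Ne.symm ha'b'),
          Finset.insert_comm b' a, Finset.erase_right_comm]
      · rw [if_neg (fun h => hC (l1.mp h)), if_neg (fun h => hC (l2.mp h))]
    · rw [fsucc_of_ge hb, hop_self]
      show (if fsucc a ∈ T ∧ a ∉ T then hop b b f (insert a (T.erase (fsucc a))) else 0) = 0
      split_ifs with h
      · exact hop_self b f _
      · rfl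
  · rw [fsucc_of_ge ha, hop_self]
    symm
    show (if b ∈ T ∧ fsucc b ∉ T then hop a a f (insert (fsucc b) (T.erase b)) else 0) = 0
    split_ifs with h
    · exact hop_self a f _
    · rfl

/-- diagonal commutator of hops -/
lemma comm_diag (a : Fin ℓ) (f : Finset (Fin ℓ) → ℂ) (T : Finset (Fin ℓ)) :
    hop a (fsucc a) (hop (fsucc a) a f) T - hop (fsucc a) a (hop a (fsucc a) f) T =
      ((if fsucc a ∈ T then (1 : ℂ) else 0) - (if a ∈ T then (1 : ℂ) else 0)) * f T := by
  by_cases ha : a.val + 1 < ℓ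
  · rw [fsucc_of_lt ha]
    set b : Fin ℓ := ⟨a.val + 1, ha⟩ with hb
    have hab : a ≠ b := fun h => by simpa [hb] using congrArg Fin.val h
    have e1 : hop a b (hop b a f) T = if b ∈ T ∧ a ∉ T then f T else 0 := by
      simp only [hop]
      by_cases h : b ∈ T ∧ a ∉ T
      · rw [if_pos h, if_pos, if_pos h]
        · congr 1
          rw [Finset.erase_insert, Finset.insert_erase h.1]
          intro hmem; exact h.2 (Finset.mem_of_mem_erase hmem)
        · constructor
          · exact Finset.mem_insert_self _ _
          · intro hmem
            rcases Finset.mem_insert.mp hmem with h' | h'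
            · exact hab h'.symm
            · exact (Finset.notMem_erase b T) h'
      · rw [if_neg h, if_neg h]
    have e2 : hop b a (hop a b f) T = if a ∈ T ∧ b ∉ T then f T else 0 := by
      simp only [hop]
      by_cases h : a ∈ T ∧ b ∉ T
      · rw [if_pos h, if_pos, if_pos h]
        · congr 1
          rw [Finset.erase_insert, Finset.insert_erase h.1]
          intro hmem; exact h.2 (Finset.mem_of_mem_erase hmem)
        · constructor
          · exact Finset.mem_insert_self _ _
          · intro hmem
            rcases Finset.mem_insert.mp hmem with h' | h'
            · exact hab h'
            · exact (Finset.notMem_erase a T) h'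
      · rw [if_neg h, if_neg h]
    rw [e1, e2]
    by_cases h1 : a ∈ T <;> by_cases h2 : b ∈ T <;> simp [h1, h2] <;> ring
  · rw [fsucc_of_ge ha]
    simp [hop_self]


lemma MFull_apply (f : Finset (Fin ℓ) → ℂ) (T : Finset (Fin ℓ)) :
    MFull ℓ f T = ∑ S : Finset (Fin ℓ), (moveCount S T : ℂ) * f S := rfl

lemma MFull_eq_hop (f : Finset (Fin ℓ) → ℂ) (T : Finset (Fin ℓ)) :
    MFull ℓ f T = ∑ a : Fin ℓ, hop a (fsucc a) f T := by
  rw [MFull_apply]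
  rw [Finset.sum_congr rfl (fun S _ => moveCount_cast_mul f S T)]
  rw [Finset.sum_comm]
  exact Finset.sum_congr rfl fun a _ => hop_sum_eval f T a

lemma Fop_apply (f : Finset (Fin ℓ) → ℂ) (T : Finset (Fin ℓ)) :
    Fop ℓ f T = ∑ b : Fin ℓ, (dcoef ℓ b : ℂ) * hop (fsucc b) b f T := rfl

/-- the counting identity -/
lemma count_id (T : Finset (Fin ℓ)) :
    (∑ a : Fin ℓ, (dcoef ℓ a : ℂ) *
      ((if fsucc a ∈ T then (1 : ℂ) else 0) - (if a ∈ T then (1 : ℂ) else 0))) =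
    ∑ k ∈ T, ((2 * ((k : Fin ℓ).val + 1) : ℂ) - (ℓ + 1)) := by
  classical
  have hA : (∑ a : Fin ℓ, (dcoef ℓ a : ℂ) * (if fsucc a ∈ T then (1 : ℂ) else 0)) =
      ∑ k ∈ T, ((k.val * (ℓ - k.val) : ℕ) : ℂ) := by
    have e1 : ∀ a : Fin ℓ, (dcoef ℓ a : ℂ) * (if fsucc a ∈ T then (1 : ℂ) else 0) =
        ∑ k ∈ T, (if fsucc a = k then (dcoef ℓ a : ℂ) else 0) := by
      intro a
      rw [Finset.sum_ite_eq T (fsucc a) (fun _ => (dcoef ℓ a : ℂ))]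
      split_ifs with h
      · ring
      · ring
    rw [Finset.sum_congr rfl (fun a _ => e1 a), Finset.sum_comm]
    refine Finset.sum_congr rfl fun k hk => ?_
    by_cases hk1 : 1 ≤ k.val
    · have hkp : k.val - 1 < ℓ := by omega
      set p : Fin ℓ := ⟨k.val - 1, hkp⟩ with hp
      have hplt : p.val + 1 < ℓ := by
        have := k.isLt; simp only [hp]; omega
      rw [Finset.sum_eq_single_of_mem p (Finset.mem_univ p)]
      · have hfp : fsucc p = k := by
          rw [fsucc_of_lt hplt]
          apply Fin.ext
          simp [hp]; omega
        rw [if_pos hfp]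
        norm_cast
        unfold dcoef
        have h1 : p.val + 1 = k.val := by simp [hp]; omega
        have h2 : ℓ - 1 - p.val = ℓ - k.val := by simp [hp]; omega
        rw [h1, h2]
      · intro a _ hap
        by_cases hfa : fsucc a = k
        · rw [if_pos hfa]
          by_cases ha : a.val + 1 < ℓ
          · exfalso
            apply hap
            have hv : (fsucc a).val = a.val + 1 := by rw [fsucc_of_lt ha]
            rw [hfa] at hv
            apply Fin.ext
            rw [hp]
            show a.val = k.val - 1
            omega
          · have hd : dcoef ℓ a = 0 := by
              unfold dcoef
              have h0 : ℓ - 1 - a.val = 0 := by omega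
              rw [h0, Nat.mul_zero]
            rw [hd]
            simp
        · rw [if_neg hfa]
    · -- k.val = 0
      have hk0 : k.val = 0 := by omega
      rw [Finset.sum_eq_zero, hk0]
      · simp
      · intro a _
        by_cases hfa : fsucc a = k
        · rw [if_pos hfa]
          by_cases ha : a.val + 1 < ℓ
          · exfalso
            have : (fsucc a).val = a.val + 1 := by rw [fsucc_of_lt ha]
            rw [hfa, hk0] at this
            omega
          · rw [fsucc_of_ge ha] at hfa
            have ha' : a.val = 0 := by rw [hfa]; exact hk0
            have : dcoef ℓ a = 0 := by
              unfold dcoef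
              have : ℓ - 1 - a.val = 0 := by omega
              rw [this, Nat.mul_zero]
            rw [this]
            simp
        · rw [if_neg hfa]
  have hB : (∑ a : Fin ℓ, (dcoef ℓ a : ℂ) * (if a ∈ T then (1 : ℂ) else 0)) =
      ∑ k ∈ T, ((dcoef ℓ k : ℕ) : ℂ) := by
    have e1 : ∀ a : Fin ℓ, (dcoef ℓ a : ℂ) * (if a ∈ T then (1 : ℂ) else 0) =
        (if a ∈ T then ((dcoef ℓ a : ℕ) : ℂ) else 0) := by
      intro a; split_ifs with h
      · ring
      · ring
    rw [Finset.sum_congr rfl (fun a _ => e1 a), Finset.sum_ite_mem, Finset.univ_inter]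
  have expand : (∑ a : Fin ℓ, (dcoef ℓ a : ℂ) *
      ((if fsucc a ∈ T then (1 : ℂ) else 0) - (if a ∈ T then (1 : ℂ) else 0))) =
      (∑ a : Fin ℓ, (dcoef ℓ a : ℂ) * (if fsucc a ∈ T then (1 : ℂ) else 0)) -
      (∑ a : Fin ℓ, (dcoef ℓ a : ℂ) * (if a ∈ T then (1 : ℂ) else 0)) := by
    rw [← Finset.sum_sub_distrib]
    exact Finset.sum_congr rfl fun a _ => by ring
  rw [expand, hA, hB, ← Finset.sum_sub_distrib]
  refine Finset.sum_congr rfl fun k hk => ?_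
  have hkl : k.val < ℓ := k.isLt
  unfold dcoef
  rw [Nat.cast_mul, Nat.cast_sub hkl.le, Nat.cast_mul, Nat.sub_sub,
    Nat.cast_sub (by omega : 1 + k.val ≤ ℓ)]
  push_cast
  ring

/-- pointwise commutator identity -/
lemma comm_pointwise (f : Finset (Fin ℓ) → ℂ) (T : Finset (Fin ℓ)) :
    MFull ℓ (Fop ℓ f) T - Fop ℓ (MFull ℓ f) T =
      (∑ k ∈ T, ((2 * ((k : Fin ℓ).val + 1) : ℂ) - (ℓ + 1))) * f T := by
  have e1 : MFull ℓ (Fop ℓ f) T =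
      ∑ a : Fin ℓ, ∑ b : Fin ℓ, (dcoef ℓ b : ℂ) * hop a (fsucc a) (hop (fsucc b) b f) T := by
    rw [MFull_eq_hop]
    refine Finset.sum_congr rfl fun a _ => ?_
    have hF : Fop ℓ f = fun X => ∑ b : Fin ℓ, (dcoef ℓ b : ℂ) * hop (fsucc b) b f X := rfl
    rw [hF, hop_sum]
    exact Finset.sum_congr rfl fun b _ => hop_mul_left _ _ _ _ _
  have e2 : Fop ℓ (MFull ℓ f) T =
      ∑ a : Fin ℓ, ∑ b : Fin ℓ, (dcoef ℓ b : ℂ) * hop (fsucc b) b (hop a (fsucc a) f) T := by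
    rw [Fop_apply]
    rw [Finset.sum_comm]
    refine Finset.sum_congr rfl fun b _ => ?_
    have hM : MFull ℓ f = fun X => ∑ a : Fin ℓ, hop a (fsucc a) f X :=
      funext (MFull_eq_hop f)
    rw [hM, hop_sum, Finset.mul_sum]
  rw [e1, e2, ← Finset.sum_sub_distrib]
  have e3 : ∀ a : Fin ℓ,
      ((∑ b : Fin ℓ, (dcoef ℓ b : ℂ) * hop a (fsucc a) (hop (fsucc b) b f) T) -
       (∑ b : Fin ℓ, (dcoef ℓ b : ℂ) * hop (fsucc b) b (hop a (fsucc a) f) T)) =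
      (dcoef ℓ a : ℂ) *
        ((if fsucc a ∈ T then (1 : ℂ) else 0) - (if a ∈ T then (1 : ℂ) else 0)) * f T := by
    intro a
    rw [← Finset.sum_sub_distrib]
    rw [Finset.sum_eq_single_of_mem a (Finset.mem_univ a)]
    · rw [← mul_sub, comm_diag]
      ring
    · intro b _ hba
      rw [comm_offdiag a b (Ne.symm hba)]
      ring
  rw [Finset.sum_congr rfl (fun a _ => e3 a)]
  rw [← Finset.sum_mul]
  rw [count_id]


lemma mem_Vw {m s : ℕ} {f : Finset (Fin ℓ) → ℂ} :
    f ∈ Vw ℓ m s ↔ ∀ S, f S ≠ 0 →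
      S.card = m ∧ ∑ k ∈ S, (k.val + 1) = s + m * (m + 1) / 2 := Iff.rfl

/-- the scalar form of the commutator on a weight space -/
lemma comm_Vw {m s : ℕ} {f : Finset (Fin ℓ) → ℂ} (hf : f ∈ Vw ℓ m s) :
    Fop ℓ (MFull ℓ f) = MFull ℓ (Fop ℓ f) - ((2 * s + m * m : ℂ) - m * ℓ) • f := by
  funext T
  have h := comm_pointwise f T
  have hsc : (∑ k ∈ T, ((2 * ((k : Fin ℓ).val + 1) : ℂ) - (ℓ + 1))) * f T =
      ((2 * s + m * m : ℂ) - m * ℓ) * f T := by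
    by_cases hfT : f T = 0
    · rw [hfT, mul_zero, mul_zero]
    · obtain ⟨hcard, hsum⟩ := hf T hfT
      congr 1
      have e1 : (∑ k ∈ T, ((2 * ((k : Fin ℓ).val + 1) : ℂ) - (ℓ + 1))) =
          2 * ((∑ k ∈ T, (k.val + 1) : ℕ) : ℂ) - (T.card : ℕ) * ((ℓ : ℂ) + 1) := by
        rw [Finset.sum_sub_distrib, Finset.sum_const, nsmul_eq_mul]
        push_cast
        rw [Finset.mul_sum]
      rw [e1, hsum, hcard]
      have e2 : 2 * (s + m * (m + 1) / 2) = 2 * s + m * (m + 1) := by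
        have hdvd : 2 ∣ m * (m + 1) := (Nat.even_mul_succ_self m).two_dvd
        have := Nat.div_mul_cancel hdvd
        omega
      have e3 : ((2 : ℂ) * ((s + m * (m + 1) / 2 : ℕ) : ℂ)) =
          ((2 * s + m * (m + 1) : ℕ) : ℂ) := by
        rw [← e2]; push_cast; ring
      rw [e3]
      push_cast
      ring
  rw [hsc] at h
  simp only [Pi.sub_apply, Pi.smul_apply, smul_eq_mul]
  linear_combination -h
lemma MFull_mem_Vw {m s : ℕ} {f : Finset (Fin ℓ) → ℂ} (hf : f ∈ Vw ℓ m s) :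
    MFull ℓ f ∈ Vw ℓ m (s + 1) := by
  intro T hT
  rw [MFull_eq_hop] at hT
  obtain ⟨a, -, ha⟩ := Finset.exists_ne_zero_of_sum_ne_zero hT
  have hc : fsucc a ∈ T ∧ a ∉ T := by
    by_contra hc
    exact ha (by simp only [hop, if_neg hc])
  have hX : f (insert a (T.erase (fsucc a))) ≠ 0 := by
    intro h0
    exact ha (by simp only [hop, if_pos hc, h0])
  have hne : a ≠ fsucc a := fun h => hc.2 (h ▸ hc.1)
  have hlt : a.val + 1 < ℓ := by
    by_contra h
    exact hne (fsucc_of_ge h).symm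
  have hbv : (fsucc a).val = a.val + 1 := by rw [fsucc_of_lt hlt]
  obtain ⟨hcard, hsum⟩ := hf _ hX
  have haX : a ∉ T.erase (fsucc a) := fun h => hc.2 (Finset.mem_of_mem_erase h)
  have hcardX : (insert a (T.erase (fsucc a))).card = (T.erase (fsucc a)).card + 1 :=
    Finset.card_insert_of_notMem haX
  have hcardE : (T.erase (fsucc a)).card = T.card - 1 := Finset.card_erase_of_mem hc.1
  have hTpos : 1 ≤ T.card := Finset.card_pos.mpr ⟨fsucc a, hc.1⟩
  have hsumX : (∑ k ∈ insert a (T.erase (fsucc a)), (k.val + 1)) =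
      (∑ k ∈ T.erase (fsucc a), (k.val + 1)) + (a.val + 1) := by
    rw [Finset.sum_insert haX]; ring
  have hsumT : (∑ k ∈ T.erase (fsucc a), (k.val + 1)) + ((fsucc a).val + 1) =
      ∑ k ∈ T, (k.val + 1) := Finset.sum_erase_add T _ hc.1
  constructor
  · omega
  · omega

lemma Fop_mem_Vw {m s : ℕ} {f : Finset (Fin ℓ) → ℂ} (hf : f ∈ Vw ℓ m (s + 1)) :
    Fop ℓ f ∈ Vw ℓ m s := by
  intro T hT
  rw [Fop_apply] at hT
  obtain ⟨b, -, hb⟩ := Finset.exists_ne_zero_of_sum_ne_zero hT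
  have hb' : hop (fsucc b) b f T ≠ 0 := fun h0 => hb (by rw [h0, mul_zero])
  have hc : b ∈ T ∧ fsucc b ∉ T := by
    by_contra hc
    exact hb' (by simp only [hop, if_neg hc])
  have hX : f (insert (fsucc b) (T.erase b)) ≠ 0 := by
    intro h0
    exact hb' (by simp only [hop, if_pos hc, h0])
  have hne : b ≠ fsucc b := fun h => hc.2 (h ▸ hc.1)
  have hlt : b.val + 1 < ℓ := by
    by_contra h
    exact hne (fsucc_of_ge h).symm
  have hbv : (fsucc b).val = b.val + 1 := by rw [fsucc_of_lt hlt]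
  obtain ⟨hcard, hsum⟩ := hf _ hX
  have hbX : fsucc b ∉ T.erase b := fun h => hc.2 (Finset.mem_of_mem_erase h)
  have hcardX : (insert (fsucc b) (T.erase b)).card = (T.erase b).card + 1 :=
    Finset.card_insert_of_notMem hbX
  have hcardE : (T.erase b).card = T.card - 1 := Finset.card_erase_of_mem hc.1
  have hTpos : 1 ≤ T.card := Finset.card_pos.mpr ⟨b, hc.1⟩
  have hsumX : (∑ k ∈ insert (fsucc b) (T.erase b), (k.val + 1)) =
      (∑ k ∈ T.erase b, (k.val + 1)) + ((fsucc b).val + 1) := by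
    rw [Finset.sum_insert hbX]; ring
  have hsumT : (∑ k ∈ T.erase b, (k.val + 1)) + (b.val + 1) =
      ∑ k ∈ T, (k.val + 1) := Finset.sum_erase_add T _ hc.1
  constructor
  · omega
  · omega

lemma Vw_high {m s : ℕ} {f : Finset (Fin ℓ) → ℂ} (hs : ℓ * ℓ < s)
    (hf : f ∈ Vw ℓ m s) : f = 0 := by
  funext T
  by_contra hT
  obtain ⟨hcard, hsum⟩ := hf T hT
  have hb : (∑ k ∈ T, (k.val + 1)) ≤ T.card * ℓ := by
    have := Finset.sum_le_card_nsmul T (fun k => k.val + 1) ℓ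
      (fun k _ => by show k.val + 1 ≤ ℓ; have := k.isLt; omega)
    simpa [smul_eq_mul] using this
  have hml : m ≤ ℓ := by
    have h1 : T.card ≤ Fintype.card (Fin ℓ) := Finset.card_le_univ T
    rw [Fintype.card_fin] at h1
    omega
  have h2 : m * ℓ ≤ ℓ * ℓ := Nat.mul_le_mul_right ℓ hml
  rw [hcard] at hb
  omega

end Aux

/-- the restriction `M_{ℓ,m}^r : V_{ℓ,m}^r → V_{ℓ,m}^{r+1}` of the
shift map is surjective whenever `r ≥ ⌊m(ℓ-m)/2⌋`. -/
theorem shift_surjective_on_high_weight (ℓ m r : ℕ) (hm : m ≤ ℓ)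
    (hr : m * (ℓ - m) / 2 ≤ r) :
    ∀ g ∈ Vw ℓ m (r + 1), ∃ f ∈ Vw ℓ m r, MFull ℓ f = g := by
  intro g hg
  classical
  set n : ℕ := m * (ℓ - m) with hn
  have hn2 : n ≤ 2 * r + 1 := by omega
  set t : ℕ := 2 * (r + 1) - n with ht
  have ht1 : 1 ≤ t := by omega
  have hnm : n + m * m = m * ℓ := by
    rw [hn, ← Nat.mul_add, Nat.sub_add_cancel hm]
  have hscalar : ∀ k : ℕ,
      ((2 * ((r + 1 + k : ℕ) : ℂ) + (m : ℂ) * m) - (m : ℂ) * ℓ) = ((t + 2 * k : ℕ) : ℂ) := by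
    intro k
    have hℕ : t + 2 * k + m * ℓ = 2 * (r + 1 + k) + m * m := by omega
    have hc := congrArg (fun x : ℕ => (x : ℂ)) hℕ
    push_cast at hc
    push_cast
    linear_combination -hc
  have hEF : ∀ x ∈ Vw ℓ m (r + 1), (MFull ℓ ∘ₗ Fop ℓ) x ∈ Vw ℓ m (r + 1) := by
    intro x hx
    exact MFull_mem_Vw (Fop_mem_Vw hx)
  set Φ : (Vw ℓ m (r + 1)) →ₗ[ℂ] (Vw ℓ m (r + 1)) :=
    (MFull ℓ ∘ₗ Fop ℓ).restrict hEF with hΦ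
  have hinj : Function.Injective Φ := by
    rw [injective_iff_map_eq_zero]
    intro x hx
    by_contra hx0
    have hv : (x : Finset (Fin ℓ) → ℂ) ∈ Vw ℓ m (r + 1) := x.2
    have hv0 : (x : Finset (Fin ℓ) → ℂ) ≠ 0 := fun h => hx0 (Subtype.ext h)
    have hEFv : MFull ℓ (Fop ℓ (x : Finset (Fin ℓ) → ℂ)) = 0 := by
      have h := congrArg (Subtype.val) hx
      simpa [hΦ, LinearMap.restrict_apply, LinearMap.comp_apply] using h
    set v : Finset (Fin ℓ) → ℂ := (x : Finset (Fin ℓ) → ℂ) with hvdef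
    set vk : ℕ → (Finset (Fin ℓ) → ℂ) := fun k => (fun w => MFull ℓ w)^[k] v with hvk
    have hvk0 : vk 0 = v := rfl
    have hvks : ∀ k, vk (k + 1) = MFull ℓ (vk k) := fun k =>
      Function.iterate_succ_apply' _ _ _
    have hwt : ∀ k, vk k ∈ Vw ℓ m (r + 1 + k) := by
      intro k
      induction k with
      | zero => exact hv
      | succ k ih =>
        rw [hvks]
        exact MFull_mem_Vw ih
    have hrec : ∀ k, Fop ℓ (vk (k + 1)) =
        (-(((k : ℂ) + 1) * (((t : ℕ) : ℂ) + k))) • vk k := by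
      intro k
      induction k with
      | zero =>
        rw [hvks 0, comm_Vw (hwt 0), hvk0, hEFv, zero_sub, ← neg_smul]
        congr 1
        rw [hscalar 0]
        push_cast
        ring
      | succ k ih =>
        rw [hvks (k + 1), comm_Vw (hwt (k + 1)), ih, map_smul, ← hvks k, ← sub_smul]
        congr 1
        rw [hscalar (k + 1)]
        push_cast
        ring
    have hnz : ∀ k, vk k ≠ 0 := by
      intro k
      induction k with
      | zero => rw [hvk0]; exact hv0
      | succ k ih =>
        intro h0
        have h1 := hrec k
        rw [h0, map_zero] at h1
        have hcne : (-(((k : ℂ) + 1) * (((t : ℕ) : ℂ) + k))) ≠ 0 := by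
          apply neg_ne_zero.mpr
          apply mul_ne_zero
          · have h2 : (((k + 1 : ℕ) : ℂ)) ≠ 0 := Nat.cast_ne_zero.mpr (Nat.succ_ne_zero k)
            intro hc
            apply h2
            push_cast
            linear_combination hc
          · have h2 : (((t + k : ℕ) : ℂ)) ≠ 0 := Nat.cast_ne_zero.mpr (by omega)
            intro hc
            apply h2
            push_cast
            linear_combination hc
        rcases smul_eq_zero.mp h1.symm with h | h
        · exact hcne h
        · exact ih h
    have hzero : vk (ℓ * ℓ + 1) = 0 := Vw_high (by omega) (hwt (ℓ * ℓ + 1))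
    exact hnz _ hzero
  have hsurj : Function.Surjective Φ := (LinearMap.injective_iff_surjective).mp hinj
  obtain ⟨u, hu⟩ := hsurj ⟨g, hg⟩
  refine ⟨Fop ℓ (u : Finset (Fin ℓ) → ℂ), Fop_mem_Vw u.2, ?_⟩
  have h := congrArg Subtype.val hu
  simpa [hΦ, LinearMap.restrict_apply, LinearMap.comp_apply] using h
end

section
/- The operator M_{ℓ,m} is nilpotent: (M_{ℓ,m})^{m(ℓ-m)+1} = 0, and (M_{ℓ,m})^{m(ℓ-m)} ≠ 0 (for 0 < m < ℓ it maps the minimal configuration {1,…,m} to a positive multiple of the maximal configuration {ℓ-m+1,…,ℓ}). -/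
open Finset

/-- The nilpotent shift operator `M_{ℓ,m}` on the space `V_{ℓ,m}` spanned by the
`m`-particle configurations on `ℓ` sites (size-`m` subsets of the sites):
a configuration is sent to the sum of all configurations obtained by moving one
particle one site to the right. -/
noncomputable def Mlm (ℓ m : ℕ) :
    ({S : Finset (Fin ℓ) // S.card = m} → ℂ) →ₗ[ℂ]
      ({S : Finset (Fin ℓ) // S.card = m} → ℂ) where
  toFun f := fun T => ∑ S : {S : Finset (Fin ℓ) // S.card = m},
    (moveCount S.1 T.1 : ℂ) * f S
  map_add' f g := by
    funext T
    simp [Pi.add_apply, mul_add, Finset.sum_add_distrib]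
  map_smul' c f := by
    funext T
    simp only [Pi.smul_apply, smul_eq_mul, RingHom.id_apply, Finset.mul_sum]
    exact Finset.sum_congr rfl fun S _ => by ring

def wt {ℓ : ℕ} (S : Finset (Fin ℓ)) : ℕ := ∑ k ∈ S, k.val
def botF (ℓ m : ℕ) : Finset (Fin ℓ) := Finset.univ.filter (fun k => k.val < m)
def topF (ℓ m : ℕ) : Finset (Fin ℓ) := Finset.univ.filter (fun k => ℓ - m ≤ k.val)

lemma wt_move {ℓ : ℕ} {S : Finset (Fin ℓ)} {k : Fin ℓ} (hk : k ∈ S) (h1 : k.val + 1 < ℓ)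
    (hk1 : (⟨k.val + 1, h1⟩ : Fin ℓ) ∉ S) :
    (insert (⟨k.val + 1, h1⟩ : Fin ℓ) (S.erase k)).card = S.card ∧
    wt (insert (⟨k.val + 1, h1⟩ : Fin ℓ) (S.erase k)) = wt S + 1 := by
  have hnotmem : (⟨k.val + 1, h1⟩ : Fin ℓ) ∉ S.erase k := fun h => hk1 (Finset.mem_of_mem_erase h)
  constructor
  · rw [Finset.card_insert_of_notMem hnotmem, Finset.card_erase_of_mem hk]
    have := Finset.card_pos.mpr ⟨k, hk⟩
    omega
  · unfold wt
    rw [Finset.sum_insert hnotmem]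
    have h2 : (∑ x ∈ S.erase k, x.val) + k.val = ∑ x ∈ S, x.val := Finset.sum_erase_add S _ hk
    show k.val + 1 + _ = _
    omega

lemma moveCount_spec {ℓ : ℕ} {S T : Finset (Fin ℓ)} (h : moveCount S T ≠ 0) :
    T.card = S.card ∧ wt T = wt S + 1 := by
  classical
  unfold moveCount at h
  obtain ⟨k, hkmem⟩ := Finset.card_ne_zero.mp h
  rw [Finset.mem_filter] at hkmem
  obtain ⟨hkS, h1, hnot, hT⟩ := hkmem
  subst hT
  exact wt_move hkS h1 hnot

lemma strictMono_le' {n : ℕ} (g : Fin n → ℕ) (hg : StrictMono g) : ∀ i : Fin n, i.val ≤ g i := by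
  have key : ∀ v : ℕ, ∀ h : v < n, v ≤ g ⟨v, h⟩ := by
    intro v
    induction v with
    | zero => intro h; exact Nat.zero_le _
    | succ v ih =>
        intro h
        have hv : v < n := by omega
        have h1 := ih hv
        have h2 : g ⟨v, hv⟩ < g ⟨v + 1, h⟩ := hg (by simp [Fin.lt_def])
        omega
  intro i
  have := key i.val i.isLt
  simpa using this

lemma strictMono_ub' {n ℓ : ℕ} (g : Fin n → ℕ) (hg : StrictMono g) (hl : ∀ i, g i < ℓ) :
    ∀ i : Fin n, g i ≤ ℓ - n + i.val := by
  have h' : StrictMono (fun j : Fin n => ℓ - 1 - g j.rev) := by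
    intro a b hab
    have h1 : g b.rev < g a.rev := hg (Fin.rev_lt_rev.mpr hab)
    have := hl a.rev
    have := hl b.rev
    simp only []
    omega
  intro i
  have h2 := strictMono_le' _ h' i.rev
  simp only [Fin.rev_rev] at h2
  have h3 : i.rev.val = n - (i.val + 1) := Fin.val_rev i
  have := hl i
  have hi := i.isLt
  omega

lemma img_topF (ℓ m : ℕ) : (topF ℓ m).image Fin.val = Finset.Ico (ℓ - m) ℓ := by
  ext j
  simp only [topF, Finset.mem_image, Finset.mem_filter, Finset.mem_univ, true_and,
    Finset.mem_Ico]
  constructor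
  · rintro ⟨k, hk, rfl⟩; exact ⟨hk, k.isLt⟩
  · rintro ⟨h1, h2⟩; exact ⟨⟨j, h2⟩, h1, rfl⟩

lemma img_botF (ℓ m : ℕ) (hm : m ≤ ℓ) : (botF ℓ m).image Fin.val = Finset.range m := by
  ext j
  simp only [botF, Finset.mem_image, Finset.mem_filter, Finset.mem_univ, true_and,
    Finset.mem_range]
  constructor
  · rintro ⟨k, hk, rfl⟩; exact hk
  · intro hj; exact ⟨⟨j, by omega⟩, hj, rfl⟩

lemma card_topF (ℓ m : ℕ) (hm : m ≤ ℓ) : (topF ℓ m).card = m := by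
  have := Finset.card_image_of_injective (topF ℓ m) (Fin.val_injective)
  rw [img_topF, Nat.card_Ico] at this
  omega

lemma card_botF (ℓ m : ℕ) (hm : m ≤ ℓ) : (botF ℓ m).card = m := by
  have := Finset.card_image_of_injective (botF ℓ m) (Fin.val_injective)
  rw [img_botF ℓ m hm, Finset.card_range] at this
  omega

lemma wt_image {ℓ : ℕ} (S : Finset (Fin ℓ)) : wt S = ∑ j ∈ S.image Fin.val, j := by
  rw [Finset.sum_image (fun x _ y _ h => Fin.val_injective h)]
  rfl

lemma wt_botF (ℓ m : ℕ) (hm : m ≤ ℓ) : wt (botF ℓ m) = ∑ i ∈ Finset.range m, i := by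
  rw [wt_image, img_botF ℓ m hm]

lemma wt_topF (ℓ m : ℕ) (hm : m ≤ ℓ) :
    wt (topF ℓ m) = (∑ i ∈ Finset.range m, i) + m * (ℓ - m) := by
  rw [wt_image, img_topF, Finset.sum_Ico_eq_sum_range]
  have h : ℓ - (ℓ - m) = m := by omega
  rw [h, Finset.sum_add_distrib, Finset.sum_const, Finset.card_range, smul_eq_mul]
  ring

lemma wt_le {ℓ m : ℕ} (S : Finset (Fin ℓ)) (hS : S.card = m) :
    (∑ i ∈ Finset.range m, i) ≤ wt S ∧
    wt S ≤ (∑ i ∈ Finset.range m, i) + m * (ℓ - m) ∧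
    (wt S = (∑ i ∈ Finset.range m, i) + m * (ℓ - m) → ∀ k ∈ S, ℓ - m ≤ k.val) := by
  classical
  set e := S.orderIsoOfFin hS with he
  set g : Fin m → ℕ := fun i => ((e i : Fin ℓ) : ℕ) with hgdef
  have hmono : StrictMono g := by
    intro a b hab
    have h1 := e.strictMono hab
    exact Subtype.coe_lt_coe.mpr h1
  have hlt : ∀ i, g i < ℓ := fun i => (e i : Fin ℓ).isLt
  have hsum : wt S = ∑ i : Fin m, g i := by
    unfold wt
    rw [← Finset.sum_coe_sort S (fun k => k.val)]
    exact (Equiv.sum_comp e.toEquiv (fun x : S => (x : Fin ℓ).val)).symm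
  have hub : ∀ i : Fin m, g i ≤ ℓ - m + i.val := strictMono_ub' g hmono hlt
  have hrange : (∑ i : Fin m, i.val) = ∑ i ∈ Finset.range m, i :=
    Fin.sum_univ_eq_sum_range (fun i => i) m
  have hrange2 : (∑ i : Fin m, (ℓ - m + i.val)) = (∑ i ∈ Finset.range m, i) + m * (ℓ - m) := by
    rw [Finset.sum_add_distrib, Finset.sum_const, Finset.card_univ, Fintype.card_fin,
      smul_eq_mul, hrange]
    ring
  refine ⟨?_, ?_, ?_⟩
  · rw [hsum, ← hrange]
    exact Finset.sum_le_sum (fun i _ => strictMono_le' g hmono i)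
  · rw [hsum, ← hrange2]
    exact Finset.sum_le_sum (fun i _ => hub i)
  · intro hw k hk
    by_contra hlt2
    push_neg at hlt2
    set i := e.symm ⟨k, hk⟩ with hi
    have hgi : g i = k.val := by
      simp [hgdef, hi]
    have hstrict : ∑ i : Fin m, g i < ∑ i : Fin m, (ℓ - m + i.val) := by
      refine Finset.sum_lt_sum (fun j _ => hub j) ⟨i, Finset.mem_univ i, ?_⟩
      rw [hgi]; omega
    rw [← hsum, hrange2, hw] at hstrict
    omega

lemma card_filter_ge {ℓ a : ℕ} :
    (Finset.univ.filter (fun j : Fin ℓ => a ≤ j.val)).card = ℓ - a := by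
  have himg : (Finset.univ.filter (fun j : Fin ℓ => a ≤ j.val)).image Fin.val
      = Finset.Ico a ℓ := by
    ext j
    simp only [Finset.mem_image, Finset.mem_filter, Finset.mem_univ, true_and, Finset.mem_Ico]
    constructor
    · rintro ⟨k, hk, rfl⟩; exact ⟨hk, k.isLt⟩
    · rintro ⟨h1, h2⟩; exact ⟨⟨j, h2⟩, h1, rfl⟩
  have := Finset.card_image_of_injective
    (Finset.univ.filter (fun j : Fin ℓ => a ≤ j.val)) (Fin.val_injective)
  rw [himg, Nat.card_Ico] at this
  omega

lemma exists_move {ℓ m : ℕ} (hm : m ≤ ℓ) (S : Finset (Fin ℓ)) (hS : S.card = m)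
    (hne : S ≠ topF ℓ m) :
    ∃ k ∈ S, ∃ h1 : k.val + 1 < ℓ, (⟨k.val + 1, h1⟩ : Fin ℓ) ∉ S := by
  by_contra hcon
  push_neg at hcon
  have step : ∀ d : ℕ, ∀ k : Fin ℓ, k ∈ S → ∀ hd : k.val + d < ℓ,
      (⟨k.val + d, hd⟩ : Fin ℓ) ∈ S := by
    intro d
    induction d with
    | zero => intro k hk hd; simpa using hk
    | succ d ih =>
        intro k hk hd
        have hd' : k.val + d < ℓ := by omega
        have h1 := ih k hk hd'
        have h2 := hcon ⟨k.val + d, hd'⟩ h1 (by show k.val + d + 1 < ℓ; omega)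
        simpa [add_assoc] using h2
  apply hne
  apply Finset.eq_of_subset_of_card_le
  · intro k hk
    simp only [topF, Finset.mem_filter, Finset.mem_univ, true_and]
    by_contra hlt
    push_neg at hlt
    have hsub : Finset.univ.filter (fun j : Fin ℓ => k.val ≤ j.val) ⊆ S := by
      intro j hj
      simp only [Finset.mem_filter, Finset.mem_univ, true_and] at hj
      have hj2 : j = ⟨k.val + (j.val - k.val), by omega⟩ := by
        apply Fin.ext; simp; omega
      rw [hj2]
      exact step _ k hk _
    have hcard := Finset.card_le_card hsub
    rw [card_filter_ge, hS] at hcard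
    have hk' := k.isLt
    omega
  · rw [hS, card_topF ℓ m hm]

lemma Mlm_apply {ℓ m : ℕ} (f : {S : Finset (Fin ℓ) // S.card = m} → ℂ)
    (T : {S : Finset (Fin ℓ) // S.card = m}) :
    (Mlm ℓ m) f T = ∑ S : {S : Finset (Fin ℓ) // S.card = m},
      (moveCount S.1 T.1 : ℂ) * f S := rfl

lemma pow_support {ℓ m : ℕ} (n : ℕ) (f : {S : Finset (Fin ℓ) // S.card = m} → ℂ)
    (T : {S : Finset (Fin ℓ) // S.card = m})
    (h : ((Mlm ℓ m ^ n) f) T ≠ 0) :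
    ∃ S : {S : Finset (Fin ℓ) // S.card = m}, f S ≠ 0 ∧ wt T.1 = wt S.1 + n := by
  induction n generalizing T with
  | zero =>
      refine ⟨T, ?_, by omega⟩
      rw [pow_zero, Module.End.one_apply] at h
      exact h
  | succ n ih =>
      rw [pow_succ', Module.End.mul_apply, Mlm_apply] at h
      obtain ⟨S, -, hS⟩ := Finset.exists_ne_zero_of_sum_ne_zero h
      have hmc : moveCount S.1 T.1 ≠ 0 := by
        intro h0; rw [h0] at hS; simp at hS
      have hfS : ((Mlm ℓ m ^ n) f) S ≠ 0 := by
        intro h0; rw [h0] at hS; simp at hS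
      obtain ⟨S0, hf0, hw⟩ := ih S hfS
      have hmv := (moveCount_spec hmc).2
      exact ⟨S0, hf0, by omega⟩

lemma pow_nat_valued {ℓ m : ℕ} (n : ℕ) (a : {S : Finset (Fin ℓ) // S.card = m} → ℕ) :
    ∃ b : {S : Finset (Fin ℓ) // S.card = m} → ℕ,
      ((Mlm ℓ m) ^ n) (fun S => (a S : ℂ)) = fun T => (b T : ℂ) := by
  induction n with
  | zero => exact ⟨a, by simp⟩
  | succ n ih =>
      obtain ⟨b, hb⟩ := ih
      refine ⟨fun T => ∑ S : {S : Finset (Fin ℓ) // S.card = m},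
        moveCount S.1 T.1 * b S, ?_⟩
      funext T
      rw [pow_succ', Module.End.mul_apply, hb, Mlm_apply]
      push_cast
      rfl

/-- `M_{ℓ,m}` is nilpotent: `(M_{ℓ,m})^{m(ℓ-m)+1} = 0` while
`(M_{ℓ,m})^{m(ℓ-m)} ≠ 0`; moreover for `0 < m < ℓ` the power `(M_{ℓ,m})^{m(ℓ-m)}`
maps the minimal configuration `{1,…,m}` to a positive multiple of the maximal
configuration `{ℓ-m+1,…,ℓ}` (sites `1,…,ℓ` are the elements `k+1`, `k : Fin ℓ`). -/
theorem Mlm_nilpotent (ℓ m : ℕ) (hm : m ≤ ℓ) :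
    (Mlm ℓ m) ^ (m * (ℓ - m) + 1) = 0 ∧ (Mlm ℓ m) ^ (m * (ℓ - m)) ≠ 0 ∧
    ∀ (Smin Smax : {S : Finset (Fin ℓ) // S.card = m}),
      (∀ k : Fin ℓ, k ∈ Smin.1 ↔ k.val < m) →
      (∀ k : Fin ℓ, k ∈ Smax.1 ↔ ℓ - m ≤ k.val) →
      0 < m → m < ℓ →
      ∃ c : ℝ, 0 < c ∧
        ((Mlm ℓ m) ^ (m * (ℓ - m)))
            (Pi.single Smin 1 : {S : Finset (Fin ℓ) // S.card = m} → ℂ)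
          = (c : ℂ) • (Pi.single Smax 1 : {S : Finset (Fin ℓ) // S.card = m} → ℂ) := by
  classical
  set N := m * (ℓ - m) with hN
  set A := ∑ i ∈ Finset.range m, i with hA
  -- Part 1 : nilpotency
  have h1 : (Mlm ℓ m) ^ (N + 1) = 0 := by
    apply LinearMap.ext
    intro f
    funext T
    by_contra hne
    obtain ⟨S, -, hw⟩ := pow_support (N + 1) f T hne
    have hb1 := (wt_le S.1 S.2).1
    have hb2 := (wt_le T.1 T.2).2.1
    omega
  -- bottom and top configurations
  set botV : {S : Finset (Fin ℓ) // S.card = m} := ⟨botF ℓ m, card_botF ℓ m hm⟩ with hbotV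
  set topV : {S : Finset (Fin ℓ) // S.card = m} := ⟨topF ℓ m, card_topF ℓ m hm⟩ with htopV
  have hsingle : (Pi.single botV 1 : {S : Finset (Fin ℓ) // S.card = m} → ℂ)
      = fun T => ((if T = botV then 1 else 0 : ℕ) : ℂ) := by
    funext T
    by_cases h : T = botV <;> simp [Pi.single_apply, h]
  have hnat : ∀ n : ℕ, ∃ b : {S : Finset (Fin ℓ) // S.card = m} → ℕ,
      ((Mlm ℓ m) ^ n) (Pi.single botV 1) = fun T => (b T : ℂ) := by
    intro n
    obtain ⟨b, hb⟩ := pow_nat_valued n (fun T => if T = botV then 1 else 0)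
    exact ⟨b, by rw [hsingle]; exact hb⟩
  -- positivity chain
  have hpos : ∀ n : ℕ, n ≤ N → ∃ T : {S : Finset (Fin ℓ) // S.card = m},
      wt T.1 = A + n ∧ ((Mlm ℓ m) ^ n) (Pi.single botV 1) T ≠ 0 := by
    intro n
    induction n with
    | zero =>
        intro _
        refine ⟨botV, by simpa using wt_botF ℓ m hm, ?_⟩
        rw [pow_zero, Module.End.one_apply]
        simp [Pi.single_apply]
    | succ n ih =>
        intro hn
        obtain ⟨T, hwT, hTne⟩ := ih (by omega)
        have hTnetop : T.1 ≠ topF ℓ m := by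
          intro heq
          rw [heq, wt_topF ℓ m hm] at hwT
          omega
        obtain ⟨k, hk, hk1, hknot⟩ := exists_move hm T.1 T.2 hTnetop
        set T' : Finset (Fin ℓ) := insert (⟨k.val + 1, hk1⟩ : Fin ℓ) (T.1.erase k) with hT'
        obtain ⟨hcard', hwt'⟩ := wt_move hk hk1 hknot
        set T'' : {S : Finset (Fin ℓ) // S.card = m} := ⟨T', by rw [hT', hcard', T.2]⟩ with hT''
        have hmc : moveCount T.1 T' ≠ 0 := by
          have hmem : k ∈ T.1.filter (fun k => ∃ h : k.val + 1 < ℓ,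
              (⟨k.val + 1, h⟩ : Fin ℓ) ∉ T.1 ∧
              T' = insert (⟨k.val + 1, h⟩ : Fin ℓ) (T.1.erase k)) :=
            Finset.mem_filter.mpr ⟨hk, hk1, hknot, rfl⟩
          unfold moveCount
          exact Finset.card_ne_zero_of_mem hmem
        obtain ⟨b, hb⟩ := hnat n
        have hbT : b T ≠ 0 := by
          intro h0
          apply hTne
          rw [hb]
          simp [h0]
        have hterm : 1 ≤ moveCount T.1 T' * b T :=
          Nat.one_le_iff_ne_zero.mpr (mul_ne_zero hmc hbT)
        have hsum_le : moveCount T.1 T' * b T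
            ≤ ∑ S : {S : Finset (Fin ℓ) // S.card = m}, moveCount S.1 T' * b S :=
          Finset.single_le_sum (f := fun S => moveCount S.1 T' * b S)
            (fun _ _ => Nat.zero_le _) (Finset.mem_univ T)
        refine ⟨T'', by show wt T' = A + (n + 1); exact hwt'.trans (by omega), ?_⟩
        have hval : ((Mlm ℓ m) ^ (n + 1)) (Pi.single botV 1) T''
            = ((∑ S : {S : Finset (Fin ℓ) // S.card = m}, moveCount S.1 T' * b S : ℕ) : ℂ) := by
          rw [pow_succ', Module.End.mul_apply, hb, Mlm_apply]
          push_cast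
          rfl
        rw [hval]
        exact Nat.cast_ne_zero.mpr (by omega)
  refine ⟨h1, ?_, ?_⟩
  · -- Part 2
    intro h0
    obtain ⟨T, -, hval⟩ := hpos N le_rfl
    rw [h0] at hval
    simp at hval
  · -- Part 3
    intro Smin Smax hminc hmaxc _ _
    have hSmin : Smin = botV := by
      apply Subtype.ext
      apply Finset.ext
      intro k
      simp [hbotV, botF, hminc k]
    have hSmax : Smax = topV := by
      apply Subtype.ext
      apply Finset.ext
      intro k
      simp [htopV, topF, hmaxc k]
    obtain ⟨b, hb⟩ := hnat N
    obtain ⟨T, hwT, hval⟩ := hpos N le_rfl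
    have huniq : ∀ T0 : {S : Finset (Fin ℓ) // S.card = m}, wt T0.1 = A + N → T0 = topV := by
      intro T0 hw
      apply Subtype.ext
      apply Finset.eq_of_subset_of_card_le
      · intro k hk
        simp only [htopV, topF, Finset.mem_filter, Finset.mem_univ, true_and]
        exact (wt_le T0.1 T0.2).2.2 hw k hk
      · rw [card_topF ℓ m hm, T0.2]
    have hT : T = topV := huniq T hwT
    have hbtop : b topV ≠ 0 := by
      intro h0
      apply hval
      rw [hb, hT]
      simp [h0]
    refine ⟨(b topV : ℝ), by positivity, ?_⟩
    rw [hSmin, hSmax, hb]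
    funext T0
    by_cases hT0 : T0 = topV
    · subst hT0
      simp only [Pi.smul_apply, Pi.single_eq_same, smul_eq_mul, mul_one]
      norm_cast
    · have hb0 : b T0 = 0 := by
        by_contra hbne
        have hne0 : ((Mlm ℓ m) ^ N) (Pi.single botV 1) T0 ≠ 0 := by
          rw [hb]
          exact Nat.cast_ne_zero.mpr hbne
        obtain ⟨S, hS0, hw⟩ := pow_support N _ T0 hne0
        have hSbot : S = botV := by
          by_contra hSne
          rw [Pi.single_apply, if_neg hSne] at hS0
          exact hS0 rfl
        rw [hSbot] at hw
        have : wt T0.1 = A + N := by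
          have := wt_botF ℓ m hm
          simp only [hbotV] at hw
          omega
        exact hT0 (huniq T0 this)
      simp [Pi.single_apply, hT0, hb0]
end

section
/- The nilpotent operator M_{6,3} on the 20-dimensional space V_{6,3} has exactly three Jordan blocks, of sizes 10, 6, and 4; equivalently, dim ker(M_{6,3})^d − dim ker(M_{6,3})^{d-1} takes the values 3,3,3,3,2,2,1,1,1,1 for d = 1,…,10. -/
open Finset

namespace M63aux
open Module LinearMap

/-! ### The model nilpotent operator with Jordan blocks 10, 6, 4 -/

def prev : Fin 20 → Option (Fin 20) := ![none, some 0, some 1, some 2, some 3, some 4, some 5, some 6, some 7, some 8, none, some 10, some 11, some 12, some 13, some 14, none, some 16, some 17, some 18]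

def prevd : ℕ → Fin 20 → Option (Fin 20)
  | 0, j => some j
  | d+1, j => (prevd d j).bind prev

noncomputable def Tmap : (Fin 20 → ℂ) →ₗ[ℂ] (Fin 20 → ℂ) where
  toFun f := fun j => (prev j).elim 0 f
  map_add' f g := by funext j; cases h : prev j <;> simp [h]
  map_smul' c f := by funext j; cases h : prev j <;> simp [h]

theorem Tmap_apply (f : Fin 20 → ℂ) (j : Fin 20) :
    Tmap f j = (prev j).elim 0 f := rfl

theorem Tpow (d : ℕ) (f : Fin 20 → ℂ) (j : Fin 20) :
    ((Tmap ^ d) f) j = (prevd d j).elim 0 f := by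
  induction d generalizing f with
  | zero => simp [prevd]
  | succ d ih =>
    rw [pow_succ, Module.End.mul_apply, ih]
    cases h : prevd d j with
    | none => simp [prevd, h]
    | some a => simp [prevd, h, Tmap_apply]

abbrev gdom (d : ℕ) := {j : Fin 20 // (prevd d j).isSome}

def gmap (d : ℕ) : gdom d → Fin 20 := fun j => (prevd d j.1).getD 0

theorem ker_T_pow (d : ℕ) :
    LinearMap.ker (Tmap ^ d) = LinearMap.ker (LinearMap.funLeft ℂ ℂ (gmap d)) := by
  ext f
  simp only [LinearMap.mem_ker]
  constructor
  · intro hf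
    funext jk
    obtain ⟨j, hj⟩ := jk
    have h0 : ((Tmap ^ d) f) j = 0 := by rw [hf]; rfl
    rw [Tpow] at h0
    cases h : prevd d j with
    | none => rw [h] at hj; simp at hj
    | some a =>
      rw [h] at h0
      simpa [LinearMap.funLeft_apply, gmap, h] using h0
  · intro hf
    funext j
    rw [show ((0 : Fin 20 → ℂ) j) = 0 from rfl, Tpow]
    cases h : prevd d j with
    | none => rfl
    | some a =>
      have := congrFun hf ⟨j, by simp [h]⟩
      simpa [LinearMap.funLeft_apply, gmap, h] using this

theorem finrank_ker_funLeft {α β : Type} [Fintype α] [Fintype β]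
    (g : α → β) (hg : Function.Injective g) :
    finrank ℂ (LinearMap.ker (LinearMap.funLeft ℂ ℂ g))
      = Fintype.card β - Fintype.card α := by
  have h1 := (LinearMap.funLeft ℂ ℂ g).finrank_range_add_finrank_ker
  rw [LinearMap.range_eq_top.mpr (LinearMap.funLeft_surjective_of_injective ℂ ℂ g hg),
    finrank_top, Module.finrank_fintype_fun_eq_card, Module.finrank_fintype_fun_eq_card] at h1
  omega

theorem finrank_ker_Tpow (d : ℕ) (hg : Function.Injective (gmap d)) :
    finrank ℂ (LinearMap.ker (Tmap ^ d)) = 20 - Fintype.card (gdom d) := by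
  rw [ker_T_pow, finrank_ker_funLeft (gmap d) hg, Fintype.card_fin]

/-! ### Conjugation invariance of kernel dimensions -/

theorem finrank_ker_conj {V W : Type} [AddCommGroup V] [Module ℂ V]
    [AddCommGroup W] [Module ℂ W]
    (Φ : V ≃ₗ[ℂ] W) (L : V →ₗ[ℂ] V) (T : W →ₗ[ℂ] W)
    (h : ∀ v, Φ (L v) = T (Φ v)) (d : ℕ) :
    finrank ℂ (LinearMap.ker (L ^ d)) = finrank ℂ (LinearMap.ker (T ^ d)) := by
  have hd : ∀ v, Φ ((L ^ d) v) = (T ^ d) (Φ v) := by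
    induction d with
    | zero => intro v; simp
    | succ d ih =>
      intro v
      rw [pow_succ, Module.End.mul_apply, ih (L v), h v, pow_succ, Module.End.mul_apply]
  have hker : LinearMap.ker (L ^ d) = (LinearMap.ker (T ^ d)).comap Φ.toLinearMap := by
    ext v
    simp only [LinearMap.mem_ker, Submodule.mem_comap, LinearEquiv.coe_coe]
    constructor
    · intro hv; rw [← hd, hv, map_zero]
    · intro hv
      apply Φ.injective
      rw [hd, hv, map_zero]
  rw [hker]
  exact (LinearEquiv.ofSubmodule' Φ (LinearMap.ker (T ^ d))).finrank_eq

/-! ### The subsets, the matrix of `Mlm 6 3`, and the change of basis -/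

def sub : Fin 20 → Finset (Fin 6) := ![{0,1,2}, {0,1,3}, {0,1,4}, {0,1,5}, {0,2,3}, {0,2,4}, {0,2,5}, {0,3,4}, {0,3,5}, {0,4,5}, {1,2,3}, {1,2,4}, {1,2,5}, {1,3,4}, {1,3,5}, {1,4,5}, {2,3,4}, {2,3,5}, {2,4,5}, {3,4,5}]

def Az : Matrix (Fin 20) (Fin 20) ℤ := !![0, 0, 0, 0, 0, 0, 0, 0, 0, 0, 0, 0, 0, 0, 0, 0, 0, 0, 0, 0;
    1, 0, 0, 0, 0, 0, 0, 0, 0, 0, 0, 0, 0, 0, 0, 0, 0, 0, 0, 0;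
    0, 1, 0, 0, 0, 0, 0, 0, 0, 0, 0, 0, 0, 0, 0, 0, 0, 0, 0, 0;
    0, 0, 1, 0, 0, 0, 0, 0, 0, 0, 0, 0, 0, 0, 0, 0, 0, 0, 0, 0;
    0, 1, 0, 0, 0, 0, 0, 0, 0, 0, 0, 0, 0, 0, 0, 0, 0, 0, 0, 0;
    0, 0, 1, 0, 1, 0, 0, 0, 0, 0, 0, 0, 0, 0, 0, 0, 0, 0, 0, 0;
    0, 0, 0, 1, 0, 1, 0, 0, 0, 0, 0, 0, 0, 0, 0, 0, 0, 0, 0, 0;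
    0, 0, 0, 0, 0, 1, 0, 0, 0, 0, 0, 0, 0, 0, 0, 0, 0, 0, 0, 0;
    0, 0, 0, 0, 0, 0, 1, 1, 0, 0, 0, 0, 0, 0, 0, 0, 0, 0, 0, 0;
    0, 0, 0, 0, 0, 0, 0, 0, 1, 0, 0, 0, 0, 0, 0, 0, 0, 0, 0, 0;
    0, 0, 0, 0, 1, 0, 0, 0, 0, 0, 0, 0, 0, 0, 0, 0, 0, 0, 0, 0;
    0, 0, 0, 0, 0, 1, 0, 0, 0, 0, 1, 0, 0, 0, 0, 0, 0, 0, 0, 0;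
    0, 0, 0, 0, 0, 0, 1, 0, 0, 0, 0, 1, 0, 0, 0, 0, 0, 0, 0, 0;
    0, 0, 0, 0, 0, 0, 0, 1, 0, 0, 0, 1, 0, 0, 0, 0, 0, 0, 0, 0;
    0, 0, 0, 0, 0, 0, 0, 0, 1, 0, 0, 0, 1, 1, 0, 0, 0, 0, 0, 0;
    0, 0, 0, 0, 0, 0, 0, 0, 0, 1, 0, 0, 0, 0, 1, 0, 0, 0, 0, 0;
    0, 0, 0, 0, 0, 0, 0, 0, 0, 0, 0, 0, 0, 1, 0, 0, 0, 0, 0, 0;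
    0, 0, 0, 0, 0, 0, 0, 0, 0, 0, 0, 0, 0, 0, 1, 0, 1, 0, 0, 0;
    0, 0, 0, 0, 0, 0, 0, 0, 0, 0, 0, 0, 0, 0, 0, 1, 0, 1, 0, 0;
    0, 0, 0, 0, 0, 0, 0, 0, 0, 0, 0, 0, 0, 0, 0, 0, 0, 0, 1, 0]

def Pz : Matrix (Fin 20) (Fin 20) ℤ := !![1, 0, 0, 0, 0, 0, 0, 0, 0, 0, 0, 0, 0, 0, 0, 0, 0, 0, 0, 0;
    0, 1, 0, 0, 0, 0, 0, 0, 0, 0, 0, 0, 0, 0, 0, 0, 0, 0, 0, 0;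
    0, 0, 1, 0, 0, 0, 0, 0, 0, 0, -1, 0, 0, 0, 0, 0, 0, 0, 0, 0;
    0, 0, 0, 1, 0, 0, 0, 0, 0, 0, 16, -1, 0, 0, 0, 0, -8, 0, 0, 0;
    0, 0, 1, 0, 0, 0, 0, 0, 0, 0, 1, 0, 0, 0, 0, 0, 0, 0, 0, 0;
    0, 0, 0, 2, 0, 0, 0, 0, 0, 0, -5, 0, 0, 0, 0, 0, 5, 0, 0, 0;
    0, 0, 0, 0, 3, 0, 0, 0, 0, 0, -1, 11, -1, 0, 0, 0, -1, -3, 0, 0;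
    0, 0, 0, 0, 2, 0, 0, 0, 0, 0, 0, -5, 0, 0, 0, 0, 0, 5, 0, 0;
    0, 0, 0, 0, 0, 5, 0, 0, 0, 0, 0, -1, 6, -1, 0, 0, 1, -1, 2, 0;
    0, 0, 0, 0, 0, 0, 5, 0, 0, 0, 0, 0, -1, 6, -1, 0, 1, 1, -1, 2;
    0, 0, 0, 1, 0, 0, 0, 0, 0, 0, 0, 1, 0, 0, 0, 0, -8, 0, 0, 0;
    0, 0, 0, 0, 3, 0, 0, 0, 0, 0, -1, -5, 1, 0, 0, 0, 1, -3, 0, 0;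
    0, 0, 0, 0, 0, 6, 0, 0, 0, 0, 1, -2, 6, 0, 0, 0, -3, 0, -6, 0;
    0, 0, 0, 0, 0, 5, 0, 0, 0, 0, -1, -1, -10, 1, 0, 0, 1, 1, 2, 0;
    0, 0, 0, 0, 0, 0, 16, 0, 0, 0, 0, 0, -4, 2, 0, 0, 0, -1, 0, -2;
    0, 0, 0, 0, 0, 0, 0, 21, 0, 0, -1, 0, 0, -5, 8, -1, 0, 1, 0, -1;
    0, 0, 0, 0, 0, 0, 5, 0, 0, 0, -1, -1, -1, -10, 1, 0, 0, 1, 1, 2;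
    0, 0, 0, 0, 0, 0, 0, 21, 0, 0, -1, -1, -1, -5, -8, 1, -1, 0, 0, 1;
    0, 0, 0, 0, 0, 0, 0, 0, 42, 0, -1, -2, -1, -1, -10, 0, -1, -1, 1, 0;
    0, 0, 0, 0, 0, 0, 0, 0, 0, 42, -1, -1, -2, -1, -1, -10, 1, -1, -1, 1]

def Qz : Matrix (Fin 20) (Fin 20) ℤ := !![-1844314665984, 0, 0, 0, 0, 0, 0, 0, 0, 0, 0, 0, 0, 0, 0, 0, 0, 0, 0, 0;
    0, -1844314665984, 0, 0, 0, 0, 0, 0, 0, 0, 0, 0, 0, 0, 0, 0, 0, 0, 0, 0;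
    0, 0, -922157332992, 0, -922157332992, 0, 0, 0, 0, 0, 0, 0, 0, 0, 0, 0, 0, 0, 0, 0;
    0, 0, 0, -219561269760, 0, -702596063232, 0, 0, 0, 0, -219561269760, 0, 0, 0, 0, 0, 0, 0, 0, 0;
    0, 0, 219561269760, 0, -219561269760, 0, -219561269760, -263473523712, 0, 0, 0, -219561269760, 0, 0, 0, 0, 0, 0, 0, 0;
    0, 0, 1778446285056, 219561269760, -1778446285056, 0, 0, 0, -131736761856, 0, -219561269760, 0, -87824507904, -131736761856, 0, 0, 0, 0, 0, 0;
    0, 0, 14008009010688, 1755444628224, -14008009010688, 23001656832, 219561269760, 0, 0, -43912253952, -1801447941888, -219561269760, 0, 0, -87824507904, 0, -43912253952, 0, 0, 0;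
    0, 0, 110484276473088, 13840724233728, -110484276473088, 167284776960, 1755444628224, 69004970496, 219561269760, 0, -14175293787648, -1801447941888, 0, -219561269760, 0, -43912253952, 0, -43912253952, 0, 0;
    0, 0, 871260939601920, 109174227563520, -871260939601920, 1310048909568, 13840724233728, 501854330880, 1812948770304, 219561269760, -111794325382656, -14175293787648, -57504142080, -1743943799808, 0, 0, -219561269760, 0, -43912253952, 0;
    0, 0, 6870349196202240, 860919703370496, -6870349196202240, 10341236231424, 109174227563520, 3930146728704, 14258936176128, 1870452912384, -881602175833344, -111794325382656, -418211942400, -13757081845248, -57504142080, 219561269760, -1686439657728, -219561269760, 0, -43912253952;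
    0, 0, 922157332992, 0, -922157332992, 0, 0, 0, 0, 0, 0, 0, 0, 0, 0, 0, 0, 0, 0, 0;
    0, 0, 7377258663936, 922157332992, -7377258663936, 0, 0, 0, 0, 0, -922157332992, 0, 0, 0, 0, 0, 0, 0, 0, 0;
    0, 0, 58095911978496, 7289434156032, -58095911978496, 87824507904, 922157332992, 0, 0, 0, -7465083171840, -922157332992, 0, 0, 0, 0, 0, 0, 0, 0;
    0, 0, 457938940338432, 57393315915264, -457938940338432, 702596063232, 7289434156032, 263473523712, 922157332992, 0, -58798508041728, -7465083171840, 0, -922157332992, 0, 0, 0, 0, 0, 0;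
    0, 0, 3611014423107840, 452493820848384, -3611014423107840, 5445119490048, 57393315915264, 2107788189696, 7508995425792, 922157332992, -463384059828480, -58798508041728, -219561269760, -7245521902080, 0, 0, -922157332992, 0, 0, 0;
    0, 0, 28474791294539520, 3568164427489536, -28474791294539520, 42849995618304, 452493820848384, 16335358470144, 59149806073344, 7728556695552, -3653864418726144, -463384059828480, -1756490158080, -57042017883648, -219561269760, 922157332992, -7025960632320, -922157332992, 0, 0;
    0, 0, 922157332992, 87824507904, -922157332992, -87824507904, 0, 0, 0, 0, 87824507904, 0, 0, 0, 0, 0, 0, 0, 0, 0;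
    0, 0, 7289434156032, 922157332992, -7289434156032, 0, 87824507904, -263473523712, 0, 0, -922157332992, 87824507904, 0, 0, 0, 0, 0, 0, 0, 0;
    0, 0, 57107886264576, 7157697394176, -57107886264576, 131736761856, 922157332992, 0, -131736761856, 0, -7421170917888, -922157332992, 219561269760, -131736761856, 0, 0, 0, 0, 0, 0;
    0, 0, 450166471388928, 56396925962496, -450166471388928, 710960302080, 7157697394176, 395210285568, 922157332992, -351298031616, -57818846566656, -7421170917888, 0, -922157332992, 219561269760, 0, -351298031616, 0, 0, 0]

def Jz : Matrix (Fin 20) (Fin 20) ℤ := !![0, 0, 0, 0, 0, 0, 0, 0, 0, 0, 0, 0, 0, 0, 0, 0, 0, 0, 0, 0;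
    1, 0, 0, 0, 0, 0, 0, 0, 0, 0, 0, 0, 0, 0, 0, 0, 0, 0, 0, 0;
    0, 1, 0, 0, 0, 0, 0, 0, 0, 0, 0, 0, 0, 0, 0, 0, 0, 0, 0, 0;
    0, 0, 1, 0, 0, 0, 0, 0, 0, 0, 0, 0, 0, 0, 0, 0, 0, 0, 0, 0;
    0, 0, 0, 1, 0, 0, 0, 0, 0, 0, 0, 0, 0, 0, 0, 0, 0, 0, 0, 0;
    0, 0, 0, 0, 1, 0, 0, 0, 0, 0, 0, 0, 0, 0, 0, 0, 0, 0, 0, 0;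
    0, 0, 0, 0, 0, 1, 0, 0, 0, 0, 0, 0, 0, 0, 0, 0, 0, 0, 0, 0;
    0, 0, 0, 0, 0, 0, 1, 0, 0, 0, 0, 0, 0, 0, 0, 0, 0, 0, 0, 0;
    0, 0, 0, 0, 0, 0, 0, 1, 0, 0, 0, 0, 0, 0, 0, 0, 0, 0, 0, 0;
    0, 0, 0, 0, 0, 0, 0, 0, 1, 0, 0, 0, 0, 0, 0, 0, 0, 0, 0, 0;
    0, 0, 0, 0, 0, 0, 0, 0, 0, 0, 0, 0, 0, 0, 0, 0, 0, 0, 0, 0;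
    0, 0, 0, 0, 0, 0, 0, 0, 0, 0, 1, 0, 0, 0, 0, 0, 0, 0, 0, 0;
    0, 0, 0, 0, 0, 0, 0, 0, 0, 0, 0, 1, 0, 0, 0, 0, 0, 0, 0, 0;
    0, 0, 0, 0, 0, 0, 0, 0, 0, 0, 0, 0, 1, 0, 0, 0, 0, 0, 0, 0;
    0, 0, 0, 0, 0, 0, 0, 0, 0, 0, 0, 0, 0, 1, 0, 0, 0, 0, 0, 0;
    0, 0, 0, 0, 0, 0, 0, 0, 0, 0, 0, 0, 0, 0, 1, 0, 0, 0, 0, 0;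
    0, 0, 0, 0, 0, 0, 0, 0, 0, 0, 0, 0, 0, 0, 0, 0, 0, 0, 0, 0;
    0, 0, 0, 0, 0, 0, 0, 0, 0, 0, 0, 0, 0, 0, 0, 0, 1, 0, 0, 0;
    0, 0, 0, 0, 0, 0, 0, 0, 0, 0, 0, 0, 0, 0, 0, 0, 0, 1, 0, 0;
    0, 0, 0, 0, 0, 0, 0, 0, 0, 0, 0, 0, 0, 0, 0, 0, 0, 0, 1, 0]

def detz : ℤ := -1844314665984

set_option maxHeartbeats 4000000 in
theorem hAzn : ∀ t : Fin 20, ∀ s : Fin 20, Az t s = (moveCount (sub s) (sub t) : ℤ) :=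
  @of_decide_eq_true _ (@Nat.decidableForallFin 20 _ fun _ => @Nat.decidableForallFin 20 _ fun _ => Int.decEq _ _) rfl

set_option maxHeartbeats 8000000 in
theorem hAPz : Az * Pz = Pz * Jz := by decide

set_option maxHeartbeats 8000000 in
theorem hPQz : Pz * Qz = detz • (1 : Matrix (Fin 20) (Fin 20) ℤ) := by decide

theorem hJzspec : ∀ j : Fin 20, ∀ k : Fin 20, Jz j k = if prev j = some k then 1 else 0 :=
  @of_decide_eq_true _ (@Nat.decidableForallFin 20 _ fun _ => @Nat.decidableForallFin 20 _ fun _ => Int.decEq _ _) rfl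

theorem hsub_card : ∀ i : Fin 20, (sub i).card = 3 := by decide

theorem hsub_inj : ∀ i j : Fin 20, sub i = sub j → i = j := by decide

def subF : Fin 20 → {S : Finset (Fin 6) // S.card = 3} := fun i => ⟨sub i, hsub_card i⟩

theorem card_V : Fintype.card {S : Finset (Fin 6) // S.card = 3} = 20 := by
  rw [Fintype.card_finset_len]
  rfl

theorem subF_bij : Function.Bijective subF := by
  rw [Fintype.bijective_iff_injective_and_card]
  exact ⟨fun i j h => hsub_inj i j (congrArg Subtype.val h), by rw [card_V]; rfl⟩

noncomputable def eSub : Fin 20 ≃ {S : Finset (Fin 6) // S.card = 3} :=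
  Equiv.ofBijective subF subF_bij

theorem eSub_val (k : Fin 20) : (eSub k).1 = sub k := rfl

noncomputable def Ac : Matrix (Fin 20) (Fin 20) ℂ := Az.map (Int.cast : ℤ → ℂ)
noncomputable def Pc : Matrix (Fin 20) (Fin 20) ℂ := Pz.map (Int.cast : ℤ → ℂ)
noncomputable def Qc : Matrix (Fin 20) (Fin 20) ℂ := Qz.map (Int.cast : ℤ → ℂ)
noncomputable def Jc : Matrix (Fin 20) (Fin 20) ℂ := Jz.map (Int.cast : ℤ → ℂ)

theorem mapMatrix_eq (M : Matrix (Fin 20) (Fin 20) ℤ) :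
    (Int.castRingHom ℂ).mapMatrix M = M.map (Int.cast : ℤ → ℂ) := rfl

theorem hAPc : Ac * Pc = Pc * Jc := by
  have h := congrArg (Int.castRingHom ℂ).mapMatrix hAPz
  rw [map_mul, map_mul, mapMatrix_eq, mapMatrix_eq, mapMatrix_eq] at h
  exact h

theorem hPQc : Pc * Qc = (detz : ℂ) • 1 := by
  have h := congrArg (Int.castRingHom ℂ).mapMatrix hPQz
  rw [map_mul, mapMatrix_eq, mapMatrix_eq, map_zsmul, map_one] at h
  rw [Pc, Qc, h]
  exact (Int.cast_smul_eq_zsmul ℂ detz (1 : Matrix (Fin 20) (Fin 20) ℂ)).symm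

theorem hdet0 : (detz : ℂ) ≠ 0 := by norm_num [detz]

noncomputable def instInvP : Invertible Pc :=
  invertibleOfRightInverse Pc ((detz : ℂ)⁻¹ • Qc) (by
    rw [Matrix.mul_smul, hPQc, smul_smul, inv_mul_cancel₀ hdet0, one_smul])

noncomputable def eqP : (Fin 20 → ℂ) ≃ₗ[ℂ] (Fin 20 → ℂ) := Pc.toLinearEquiv' instInvP

theorem eqP_apply (u : Fin 20 → ℂ) : eqP u = Matrix.toLin' Pc u := rfl

theorem hJT : Matrix.toLin' Jc = Tmap := by
  apply LinearMap.ext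
  intro f
  funext j
  have hrow : ∀ k, Jc j k = if prev j = some k then 1 else 0 := by
    intro k
    rw [Jc, Matrix.map_apply, hJzspec j k, apply_ite (Int.cast : ℤ → ℂ)]
    norm_num
  rw [Matrix.toLin'_apply, Tmap_apply]
  show ∑ k, Jc j k * f k = _
  cases h : prev j with
  | none => simp [hrow, h]
  | some a =>
    simp only [hrow, h, Option.some.injEq, Option.elim]
    rw [Finset.sum_congr rfl (fun k _ => by rw [ite_mul, one_mul, zero_mul]),
      Finset.sum_ite_eq Finset.univ a f]
    simp

noncomputable def Φ63 : ({S : Finset (Fin 6) // S.card = 3} → ℂ) ≃ₗ[ℂ] (Fin 20 → ℂ) :=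
  (LinearEquiv.funCongrLeft ℂ ℂ eSub).trans eqP.symm

theorem hAc_entry (j k : Fin 20) : Ac j k = ((moveCount (sub k) (sub j) : ℕ) : ℂ) := by
  rw [Ac, Matrix.map_apply, hAzn j k]
  push_cast
  rfl

theorem hA_corr (f : {S : Finset (Fin 6) // S.card = 3} → ℂ) :
    LinearEquiv.funCongrLeft ℂ ℂ eSub (Mlm 6 3 f)
      = Matrix.toLin' Ac (LinearEquiv.funCongrLeft ℂ ℂ eSub f) := by
  funext j
  have hL : LinearEquiv.funCongrLeft ℂ ℂ eSub (Mlm 6 3 f) j = Mlm 6 3 f (eSub j) := rfl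
  have hR : Matrix.toLin' Ac (LinearEquiv.funCongrLeft ℂ ℂ eSub f) j
      = ∑ k, Ac j k * f (eSub k) := by
    rw [Matrix.toLin'_apply]
    rfl
  rw [hL, hR]
  show (∑ S : {S : Finset (Fin 6) // S.card = 3},
      (moveCount S.1 (eSub j).1 : ℂ) * f S) = _
  refine (Fintype.sum_equiv eSub
    (fun k => Ac j k * f (eSub k))
    (fun S => (moveCount S.1 (eSub j).1 : ℂ) * f S) ?_).symm
  intro k
  rw [hAc_entry j k, eSub_val, eSub_val]

theorem hconj (f : {S : Finset (Fin 6) // S.card = 3} → ℂ) :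
    Φ63 (Mlm 6 3 f) = Tmap (Φ63 f) := by
  have key : ∀ u : Fin 20 → ℂ, eqP.symm (Matrix.toLin' Ac (eqP u)) = Tmap u := by
    intro u
    apply eqP.injective
    rw [eqP.apply_symm_apply, eqP_apply, eqP_apply, ← Matrix.toLin'_mul_apply, hAPc,
      Matrix.toLin'_mul_apply, hJT]
  have h1 : Φ63 (Mlm 6 3 f) = eqP.symm (LinearEquiv.funCongrLeft ℂ ℂ eSub (Mlm 6 3 f)) := rfl
  have h2 : Φ63 f = eqP.symm (LinearEquiv.funCongrLeft ℂ ℂ eSub f) := rfl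
  rw [h1, h2, hA_corr, ← key (eqP.symm (LinearEquiv.funCongrLeft ℂ ℂ eSub f)),
    eqP.apply_symm_apply]

theorem finrank_ker_M63 (d : ℕ) (hg : Function.Injective (gmap d)) :
    finrank ℂ (LinearMap.ker ((Mlm 6 3) ^ d)) = 20 - Fintype.card (gdom d) := by
  rw [finrank_ker_conj Φ63 (Mlm 6 3) Tmap hconj d, finrank_ker_Tpow d hg]

end M63aux

/-- the nilpotent operator `M_{6,3}` on the 20-dimensional space
`V_{6,3}` has exactly three Jordan blocks, of sizes 10, 6 and 4; equivalently
`dim ker (M_{6,3})^d − dim ker (M_{6,3})^{d-1}` takes the values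
`3,3,3,3,2,2,1,1,1,1` for `d = 1,…,10`. -/
theorem jordan_structure_M63 :
    Fintype.card {S : Finset (Fin 6) // S.card = 3} = 20 ∧
    ∀ d : ℕ, 1 ≤ d → d ≤ 10 →
      Module.finrank ℂ (LinearMap.ker ((Mlm 6 3) ^ d))
          - Module.finrank ℂ (LinearMap.ker ((Mlm 6 3) ^ (d - 1)))
        = [3, 3, 3, 3, 2, 2, 1, 1, 1, 1].getD (d - 1) 0 := by
  refine ⟨M63aux.card_V, ?_⟩
  intro d h1 h10
  interval_cases d <;>
    rw [M63aux.finrank_ker_M63 _ (by decide), M63aux.finrank_ker_M63 _ (by decide)] <;>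
    norm_num <;>
    decide
end
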